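/- arXiv:1305.0216 — 3 statements merged into one kernel-verified Lean document; each statement's English description precedes it below -/
import Mathlib

section
/- There exist infinitely many rational numbers c such that the map f_c(z) = z^2 + c has exactly 6 rational preperiodic points, of which exactly 2 are periodic, and these two periodic points form a cycle of exact length 2 (i.e., f_c interchanges two distinct rational points). (This data characterizes the directed graph 6(2).) -/
set_option linter.unusedSectionVars false
set_option maxHeartbeats 1000000



/-- The quadratic map `f_c(z) = z² + c`. -/
def fc (c : ℚ) : ℚ → ℚ := fun z => z ^ 2 + c

/-- `x` is preperiodic for `f_c`: its forward orbit is eventually periodic. -/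
def IsPreper (c x : ℚ) : Prop := ∃ m n : ℕ, m < n ∧ (fc c)^[m] x = (fc c)^[n] x

/-- `x` is periodic for `f_c`. -/
def IsPer (c x : ℚ) : Prop := ∃ n : ℕ, 1 ≤ n ∧ (fc c)^[n] x = x

namespace G62

lemma preper_fc {c x : ℚ} (h : IsPreper c x) : IsPreper c (fc c x) := by
  obtain ⟨m, n, hmn, heq⟩ := h
  refine ⟨m, n, hmn, ?_⟩
  rw [← Function.iterate_succ_apply, ← Function.iterate_succ_apply,
    Function.iterate_succ_apply', Function.iterate_succ_apply', heq]

lemma orbit_bounded {c x : ℚ} (h : IsPreper c x) : ∃ B : ℚ, ∀ k, |(fc c)^[k] x| ≤ B := by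
  obtain ⟨m, n, hmn, heq⟩ := h
  have key : ∀ k, ∃ j ≤ n, (fc c)^[k] x = (fc c)^[j] x := by
    intro k
    induction k with
    | zero => exact ⟨0, Nat.zero_le _, rfl⟩
    | succ k ih =>
      obtain ⟨j, hj, hjx⟩ := ih
      rcases lt_or_eq_of_le hj with hlt | hEq
      · exact ⟨j + 1, hlt, by
          simp only [Function.iterate_succ_apply']; rw [hjx]⟩
      · refine ⟨m + 1, hmn, ?_⟩
        simp only [Function.iterate_succ_apply']
        rw [hjx, hEq, ← heq]
  refine ⟨(Finset.range (n + 1)).sup' (by simp) (fun j => |(fc c)^[j] x|), fun k => ?_⟩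
  obtain ⟨j, hj, hjx⟩ := key k
  rw [hjx]
  exact Finset.le_sup' (fun j => |(fc c)^[j] x|) (Finset.mem_range.mpr (show j < n + 1 by omega))

lemma abs_lt_of_preper {c x M : ℚ} (hM : 1 ≤ M) (hM2 : M + 1 ≤ M ^ 2 + c)
    (h : IsPreper c x) : |x| < M := by
  by_contra hx
  push_neg at hx
  have key : ∀ k : ℕ, M + k ≤ |(fc c)^[k] x| := by
    intro k
    induction k with
    | zero => simpa using hx
    | succ k ih =>
      rw [Function.iterate_succ_apply']
      set z := (fc c)^[k] x with hz
      have h1 : M ≤ |z| := le_trans (by simp [Nat.cast_nonneg]) ih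
      have hzz : z ^ 2 = |z| ^ 2 := (sq_abs z).symm
      have h2 : |z| + 1 ≤ z ^ 2 + c := by nlinarith [abs_nonneg z]
      have h3 : fc c z = z ^ 2 + c := rfl
      have h4 : 0 < z ^ 2 + c := by nlinarith [abs_nonneg z]
      rw [h3, abs_of_pos h4]
      have : (k : ℚ) + 1 = ((k + 1 : ℕ) : ℚ) := by push_cast; ring
      linarith [ih, h2, abs_nonneg z]
  obtain ⟨B, hB⟩ := orbit_bounded h
  obtain ⟨k, hk⟩ := exists_nat_gt (B - M)
  have := key k
  have := hB k
  linarith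

lemma val_iter {q : ℕ} [Fact q.Prime] {c x : ℚ} (hc : c ≠ 0) (hx : x ≠ 0)
    (hneg : padicValRat q x < 0) (hval : 2 * padicValRat q x < padicValRat q c) :
    ∀ k, (fc c)^[k] x ≠ 0 ∧ padicValRat q ((fc c)^[k] x) = 2 ^ k * padicValRat q x := by
  intro k
  induction k with
  | zero => exact ⟨hx, by simp⟩
  | succ k ih =>
    obtain ⟨hz0, hzval⟩ := ih
    set z := (fc c)^[k] x with hzdef
    have hz2 : z ^ 2 ≠ 0 := pow_ne_zero _ hz0
    have hv2 : padicValRat q (z ^ 2) = 2 ^ (k + 1) * padicValRat q x := by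
      rw [padicValRat.pow z, hzval]; push_cast; ring
    have hlt : padicValRat q (z ^ 2) < padicValRat q c := by
      rw [hv2]
      have h1 : (2 : ℤ) ^ (k + 1) * padicValRat q x ≤ 2 * padicValRat q x := by
        have h2 : (2 : ℤ) ≤ 2 ^ (k + 1) := by
          calc (2:ℤ) = 2 ^ 1 := by ring
          _ ≤ 2 ^ (k+1) := pow_le_pow_right₀ one_le_two (by omega)
        nlinarith
      linarith
    have hsum : z ^ 2 + c ≠ 0 := by
      intro hzero
      have : c = -(z ^ 2) := by linarith [hzero]
      rw [this, padicValRat.neg] at hlt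
      exact lt_irrefl _ hlt
    have hfz : fc c z = z ^ 2 + c := rfl
    rw [Function.iterate_succ_apply', ← hzdef, hfz]
    refine ⟨hsum, ?_⟩
    rw [padicValRat.add_eq_of_lt hsum hz2 hc hlt, hv2]

lemma val_ge_of_preper {q : ℕ} [Fact q.Prime] {c x : ℚ} (hc : c ≠ 0) (hx : x ≠ 0)
    (h : IsPreper c x) (hneg : padicValRat q x < 0) :
    padicValRat q c ≤ 2 * padicValRat q x := by
  by_contra hval
  push_neg at hval
  obtain ⟨m, n, hmn, heq⟩ := h
  have h1 := (val_iter hc hx hneg hval m).2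
  have h2 := (val_iter hc hx hneg hval n).2
  rw [heq] at h1
  rw [h1] at h2
  have hlt : (2 : ℤ) ^ m < 2 ^ n := by
    exact pow_lt_pow_right₀ one_lt_two hmn
  nlinarith [hneg, hlt]

lemma den_one_of_val_nonneg {z : ℚ} (h : ∀ q : ℕ, q.Prime → 0 ≤ padicValRat q z) :
    ∃ y : ℤ, z = (y : ℚ) := by
  refine ⟨z.num, ?_⟩
  have hden : z.den = 1 := by
    by_contra hden
    obtain ⟨q, hq, hqd⟩ := Nat.exists_prime_and_dvd hden
    haveI := Fact.mk hq
    have hnum : ¬ (q : ℤ) ∣ z.num := by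
      intro hdvd
      have h1 : q ∣ z.num.natAbs := Int.natCast_dvd_natCast.mp (by
        rwa [Int.dvd_natAbs])
      have := Nat.Coprime.eq_one_of_dvd (Nat.Coprime.coprime_dvd_left h1 z.reduced) hqd
      exact hq.ne_one this
    have hv : padicValRat q z = - (padicValNat q z.den : ℤ) := by
      rw [padicValRat_def, padicValInt.eq_zero_of_not_dvd hnum]
      simp
    have hpos : 1 ≤ padicValNat q z.den :=
      one_le_padicValNat_of_dvd z.den_nz hqd
    have := h q hq
    rw [hv] at this
    omega
  conv_lhs => rw [← Rat.num_div_den z, hden]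
  simp

lemma int_abs_le {a b : ℤ} (hb : 0 ≤ b) (h : a ^ 2 ≤ b ^ 2) : -b ≤ a ∧ a ≤ b := by
  constructor <;> nlinarith [sq_nonneg (a - b), sq_nonneg (a + b)]


/-! ### The family -/

def cP (u : ℕ) : ℚ := -(((u : ℚ) ^ 2 + u - 1) ^ 2 + 3 * (u : ℚ) ^ 2) / (4 * (u : ℚ) ^ 2)

def Nz (u : ℕ) : ℤ := ((u : ℤ) ^ 2 + u - 1) ^ 2 + 3 * (u : ℤ) ^ 2

def AP (u : ℕ) : ℚ := ((u : ℚ) ^ 2 - 1) / (2 * u)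
def BP (u : ℕ) : ℚ := -(((u : ℚ) ^ 2 + 2 * u - 1) / (2 * u))
def QP (u : ℕ) : ℚ := ((u : ℚ) ^ 2 + 1) / (2 * u)

section family

variable {u : ℕ} (hu : u.Prime) (hu5 : 5 ≤ u)

include hu5 in
lemma uq5 : (5 : ℚ) ≤ (u : ℚ) := by exact_mod_cast hu5

include hu5 in
lemma uq0 : (u : ℚ) ≠ 0 := by
  have := uq5 hu5; intro h; rw [h] at this; norm_num at this

include hu hu5 in
lemma u_odd : Odd u := hu.odd_of_ne_two (by omega)

lemma Nz_cast (u : ℕ) : ((Nz u : ℚ)) = ((u : ℚ) ^ 2 + u - 1) ^ 2 + 3 * (u : ℚ) ^ 2 := by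
  unfold Nz; push_cast; ring

lemma Nz_poly (u : ℕ) : Nz u = (u:ℤ)^4 + 2*(u:ℤ)^3 + 2*(u:ℤ)^2 - 2*(u:ℤ) + 1 := by
  unfold Nz; ring

lemma cP_eq : cP u = -((Nz u : ℚ)) / (4 * (u : ℚ) ^ 2) := by
  rw [Nz_cast]; rfl

include hu5 in
lemma Nz_pos : 0 < Nz u := by
  rw [Nz_poly]
  have : (5:ℤ) ≤ (u:ℤ) := by exact_mod_cast hu5
  nlinarith

include hu5 in
lemma cP_neg : cP u < 0 := by
  rw [cP_eq]
  have h1 : (0:ℚ) < (Nz u : ℚ) := by exact_mod_cast Nz_pos hu5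
  have h2 : (0:ℚ) < 4 * (u:ℚ)^2 := by
    have := uq5 hu5; nlinarith
  exact div_neg_of_neg_of_pos (by linarith) h2

include hu5 in
lemma cP_ne : cP u ≠ 0 := ne_of_lt (cP_neg hu5)

-- u ∤ Nz
include hu hu5 in
lemma not_dvd_Nz : ¬ ((u:ℤ) ∣ Nz u) := by
  intro h
  have h2 : Nz u = (u:ℤ) * ((u:ℤ)^3 + 2*(u:ℤ)^2 + 2*(u:ℤ) - 2) + 1 := by
    rw [Nz_poly]; ring
  rw [h2] at h
  have hd : (u:ℤ) ∣ 1 := (dvd_add_right (Dvd.intro _ rfl)).mp h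
  have := Int.le_of_dvd one_pos hd
  have : (5:ℤ) ≤ (u:ℤ) := by exact_mod_cast hu5
  omega


include hu hu5 in
lemma val_c_self : padicValRat u (cP u) = -2 := by
  haveI := Fact.mk hu
  have hN0 : ((Nz u : ℚ)) ≠ 0 := by
    exact_mod_cast ne_of_gt (Nz_pos hu5)
  have hu0 : (u:ℚ) ≠ 0 := uq0 hu5
  have h4 : (4 : ℚ) ≠ 0 := by norm_num
  have hu2 : ((u:ℚ))^2 ≠ 0 := pow_ne_zero _ hu0
  rw [cP_eq, neg_div, padicValRat.neg, padicValRat.div hN0 (by positivity),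
    padicValRat.mul h4 hu2, padicValRat.pow (u:ℚ)]
  have h1 : padicValRat u ((Nz u : ℚ)) = 0 := by
    rw [padicValRat.of_int, padicValInt.eq_zero_of_not_dvd (not_dvd_Nz hu hu5)]
    rfl
  have h2 : padicValRat u ((4:ℚ)) = 0 := by
    have : ((4:ℕ):ℚ) = (4:ℚ) := by norm_num
    rw [← this, padicValRat.of_nat, padicValNat.eq_zero_of_not_dvd (by
      intro hdvd
      have := Nat.le_of_dvd (by norm_num) hdvd
      omega)]
    rfl
  have h3 : padicValRat u ((u:ℚ)) = 1 := padicValRat.self hu.one_lt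
  rw [h1, h2, h3]
  ring

include hu hu5 in
lemma val_c_other (q : ℕ) (hq : q.Prime) (hqu : q ≠ u) : 0 ≤ padicValRat q (cP u) := by
  haveI := Fact.mk hq
  have hN0 : ((Nz u : ℚ)) ≠ 0 := by exact_mod_cast ne_of_gt (Nz_pos hu5)
  have hu0 : (u:ℚ) ≠ 0 := uq0 hu5
  have h4 : (4 : ℚ) ≠ 0 := by norm_num
  have hu2 : ((u:ℚ))^2 ≠ 0 := pow_ne_zero _ hu0
  have hvu : padicValRat q ((u:ℚ)) = 0 := by
    rw [padicValRat.of_nat, padicValNat.eq_zero_of_not_dvd (by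
      intro hdvd
      exact hqu ((Nat.prime_dvd_prime_iff_eq hq hu).mp hdvd))]
    rfl
  rw [cP_eq, neg_div, padicValRat.neg, padicValRat.div hN0 (by positivity),
    padicValRat.mul h4 hu2, padicValRat.pow (u:ℚ), hvu]
  rcases eq_or_ne q 2 with h2 | h2
  · -- q = 2 : v_2(Nz) = 2, v_2(4) = 2
    subst h2
    obtain ⟨t, ht⟩ := u_odd hu hu5
    have htz : (u:ℤ) = 2*(t:ℤ)+1 := by exact_mod_cast ht
    have hNz4 : Nz u = 4 * (4*(t:ℤ)^4+12*(t:ℤ)^3+14*(t:ℤ)^2+6*(t:ℤ)+1) := by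
      rw [Nz_poly, htz]; ring
    set M : ℤ := 4*(t:ℤ)^4+12*(t:ℤ)^3+14*(t:ℤ)^2+6*(t:ℤ)+1 with hM
    have hModd : ¬ ((2:ℤ) ∣ M) := by
      rw [hM]
      intro hdvd
      have : (2:ℤ) ∣ 1 := by
        have h2' : (2:ℤ) ∣ (4*(t:ℤ)^4+12*(t:ℤ)^3+14*(t:ℤ)^2+6*(t:ℤ)) :=
          ⟨2*(t:ℤ)^4+6*(t:ℤ)^3+7*(t:ℤ)^2+3*(t:ℤ), by ring⟩
        omega
      norm_num at this
    have hM0 : (M:ℚ) ≠ 0 := by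
      intro h0
      apply hModd
      have : M = 0 := by exact_mod_cast h0
      simp [this]
    have hv4 : padicValRat 2 ((4:ℚ)) = 2 := by
      have : (4:ℚ) = (2:ℚ)^2 := by norm_num
      rw [this, padicValRat.pow (2:ℚ)]
      have : padicValRat 2 ((2:ℚ)) = 1 := padicValRat.self (by norm_num)
      rw [this]; ring
    have hvN : padicValRat 2 ((Nz u : ℚ)) = 2 := by
      have hcast : ((Nz u : ℚ)) = (4:ℚ) * (M:ℚ) := by
        rw [hNz4]; push_cast; ring
      rw [hcast, padicValRat.mul h4 hM0, hv4]
      have : padicValRat 2 ((M:ℚ)) = 0 := by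
        rw [padicValRat.of_int, padicValInt.eq_zero_of_not_dvd (by exact_mod_cast hModd)]
        rfl
      rw [this]; ring
    rw [hvN, hv4]
    ring_nf
    norm_num
  · -- q odd prime
    have hv4 : padicValRat q ((4:ℚ)) = 0 := by
      have : ((4:ℕ):ℚ) = (4:ℚ) := by norm_num
      rw [← this, padicValRat.of_nat, padicValNat.eq_zero_of_not_dvd (by
        intro hdvd
        have h22 : (4:ℕ) = 2^2 := by norm_num
        rw [h22] at hdvd
        exact h2 ((Nat.prime_dvd_prime_iff_eq hq Nat.prime_two).mp (hq.dvd_of_dvd_pow hdvd)))]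
      rfl
    have hvN : 0 ≤ padicValRat q ((Nz u : ℚ)) := by
      rw [padicValRat.of_int]
      positivity
    rw [hv4] at *
    omega


include hu hu5 in
lemma val_prime_ne (q : ℕ) (hq : q.Prime) (hqu : q ≠ u) : padicValRat q ((u:ℚ)) = 0 := by
  rw [padicValRat.of_nat, padicValNat.eq_zero_of_not_dvd (by
    intro hdvd
    exact hqu ((Nat.prime_dvd_prime_iff_eq hq hu).mp hdvd))]
  rfl

include hu hu5 in
lemma preper_ne_zero {x : ℚ} (h : IsPreper (cP u) x) : x ≠ 0 := by
  haveI := Fact.mk hu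
  intro h0
  have hc : IsPreper (cP u) (cP u) := by
    have := preper_fc h
    rw [h0] at this
    simpa [fc] using this
  have hle := val_ge_of_preper (q := u) (cP_ne hu5) (cP_ne hu5) hc
    (by rw [val_c_self hu hu5]; norm_num)
  rw [val_c_self hu hu5] at hle
  omega

include hu hu5 in
lemma val_u_eq_neg_one {x : ℚ} (h : IsPreper (cP u) x) : padicValRat u x = -1 := by
  haveI := Fact.mk hu
  have hx0 := preper_ne_zero hu hu5 h
  have hvc := val_c_self hu hu5
  rcases lt_trichotomy (padicValRat u x) (-1) with hlt | heq | hgt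
  · have := val_ge_of_preper (q := u) (cP_ne hu5) hx0 h (by omega)
    rw [hvc] at this
    omega
  · exact heq
  · have hx_nonneg : 0 ≤ padicValRat u x := by omega
    set x1 := fc (cP u) x with hx1
    have hx1p : IsPreper (cP u) x1 := preper_fc h
    have hx2ne : x ^ 2 ≠ 0 := pow_ne_zero _ hx0
    have hvx2 : padicValRat u (x ^ 2) = 2 * padicValRat u x := by
      rw [padicValRat.pow x]; push_cast; ring
    have hlt2 : padicValRat u (cP u) < padicValRat u (x ^ 2) := by
      rw [hvc, hvx2]; omega
    have hsum : cP u + x ^ 2 ≠ 0 := by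
      intro h0
      have heqq : cP u = -(x ^ 2) := by linarith
      rw [heqq, padicValRat.neg] at hlt2
      exact lt_irrefl _ hlt2
    have hx1eq : x1 = cP u + x ^ 2 := by rw [hx1]; show x ^ 2 + cP u = _; ring
    have hvx1 : padicValRat u x1 = -2 := by
      rw [hx1eq, padicValRat.add_eq_of_lt hsum (cP_ne hu5) hx2ne hlt2, hvc]
    have hx1ne : x1 ≠ 0 := by rw [hx1eq]; exact hsum
    have := val_ge_of_preper (q := u) (cP_ne hu5) hx1ne hx1p (by rw [hvx1]; norm_num)
    rw [hvc, hvx1] at this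
    omega

include hu hu5 in
lemma int_rep {x : ℚ} (h : IsPreper (cP u) x) : ∃ y : ℤ, (u:ℚ) * x = (y:ℚ) := by
  haveI := Fact.mk hu
  apply den_one_of_val_nonneg
  intro q hq
  haveI := Fact.mk hq
  have hx0 := preper_ne_zero hu hu5 h
  have hu0 : (u:ℚ) ≠ 0 := uq0 hu5
  rw [padicValRat.mul hu0 hx0]
  rcases eq_or_ne q u with rfl | hqu
  · rw [padicValRat.self hu.one_lt, val_u_eq_neg_one hu hu5 h]
    omega
  · have hvu := val_prime_ne hu hu5 q hq hqu
    have hvx : 0 ≤ padicValRat q x := by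
      by_contra hneg
      push_neg at hneg
      have h1 := val_ge_of_preper (q := q) (cP_ne hu5) hx0 h (by omega)
      have h2 := val_c_other hu hu5 q hq hqu
      omega
    omega

include hu5 in
lemma abs_bound {x : ℚ} (h : IsPreper (cP u) x) : |x| < ((u:ℚ) + 3) / 2 := by
  have h5 := uq5 hu5
  have hu0 : (u:ℚ) ≠ 0 := uq0 hu5
  apply abs_lt_of_preper (by linarith) ?_ h
  have expand : (((u:ℚ) + 3) / 2) ^ 2 + cP u - ((((u:ℚ) + 3) / 2) + 1) =
      (2 * (u:ℚ) ^ 3 - 3 * (u:ℚ) ^ 2 + 2 * (u:ℚ) - 1) / (4 * (u:ℚ) ^ 2) := by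
    rw [cP_eq, Nz_cast]
    field_simp
    ring
  have hnum : 0 ≤ (2 * (u:ℚ) ^ 3 - 3 * (u:ℚ) ^ 2 + 2 * (u:ℚ) - 1) := by nlinarith
  have hden : (0:ℚ) < 4 * (u:ℚ) ^ 2 := by positivity
  have := div_nonneg hnum (le_of_lt hden)
  linarith [expand ▸ this]

include hu hu5 in
lemma enum_pos {W : ℤ} (heven : 2 ∣ W)
    (hdvd : (u:ℤ) ∣ W ^ 2 - 1) (hlb : (u:ℤ) ^ 2 - 2 ≤ W) (hub : W ≤ (u:ℤ) ^ 2 + 2 * u + 1) :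
    W = (u:ℤ) ^ 2 - 1 ∨ W = (u:ℤ) ^ 2 + 1 ∨ W = (u:ℤ) ^ 2 + 2 * u - 1 ∨
      W = (u:ℤ) ^ 2 + 2 * u + 1 := by
  have hU5 : (5:ℤ) ≤ (u:ℤ) := by exact_mod_cast hu5
  have hUodd : (u:ℤ) % 2 = 1 := by
    obtain ⟨t, ht⟩ := u_odd hu hu5
    have : (u:ℤ) = 2 * (t:ℤ) + 1 := by exact_mod_cast ht
    omega
  have hWeven : Even W := by obtain ⟨w2, hw2⟩ := heven; exact ⟨w2, by omega⟩
  have hsplit : ((u:ℤ) ∣ W - 1) ∨ ((u:ℤ) ∣ W + 1) := by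
    have hfac : W ^ 2 - 1 = (W - 1) * (W + 1) := by ring
    rw [hfac] at hdvd
    exact Int.Prime.dvd_mul' hu hdvd
  rcases hsplit with ⟨k, hk⟩ | ⟨k, hk⟩
  · -- W - 1 = u * k
    have hk1 : (u:ℤ) ≤ k := by
      by_contra hcon
      push_neg at hcon
      have h1 : (u:ℤ) * k ≤ (u:ℤ) * ((u:ℤ) - 1) :=
        mul_le_mul_of_nonneg_left (by omega) (by omega)
      nlinarith
    have hk2 : k ≤ (u:ℤ) + 2 := by
      by_contra hcon
      push_neg at hcon
      have h1 : (u:ℤ) * ((u:ℤ) + 3) ≤ (u:ℤ) * k :=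
        mul_le_mul_of_nonneg_left (by omega) (by omega)
      nlinarith
    have hkodd : k % 2 = 1 := by
      have hWo : Odd (W - 1) := Even.sub_odd hWeven odd_one
      rw [hk] at hWo
      exact Int.odd_iff.mp (Int.odd_mul.mp hWo).2
    have : k = (u:ℤ) ∨ k = (u:ℤ) + 2 := by omega
    rcases this with rfl | rfl
    · right; left; linear_combination hk
    · right; right; right; linear_combination hk
  · -- W + 1 = u * k
    have hk1 : (u:ℤ) ≤ k := by
      by_contra hcon
      push_neg at hcon
      have h1 : (u:ℤ) * k ≤ (u:ℤ) * ((u:ℤ) - 1) :=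
        mul_le_mul_of_nonneg_left (by omega) (by omega)
      nlinarith
    have hk2 : k ≤ (u:ℤ) + 2 := by
      by_contra hcon
      push_neg at hcon
      have h1 : (u:ℤ) * ((u:ℤ) + 3) ≤ (u:ℤ) * k :=
        mul_le_mul_of_nonneg_left (by omega) (by omega)
      nlinarith
    have hkodd : k % 2 = 1 := by
      have hWo : Odd (W + 1) := Even.add_odd hWeven odd_one
      rw [hk] at hWo
      exact Int.odd_iff.mp (Int.odd_mul.mp hWo).2
    have : k = (u:ℤ) ∨ k = (u:ℤ) + 2 := by omega
    rcases this with rfl | rfl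
    · left; linear_combination hk
    · right; right; left; linear_combination hk

include hu hu5 in
lemma enum {W : ℤ} (heven : 2 ∣ W)
    (hdvd : (u:ℤ) ∣ W ^ 2 - 1)
    (hlow : (u:ℤ) ^ 4 - 4 * (u:ℤ) ^ 2 + 1 ≤ W ^ 2)
    (hhigh : W ^ 2 ≤ (u:ℤ) ^ 4 + 4 * (u:ℤ) ^ 3 + 8 * (u:ℤ) ^ 2 - 4 * (u:ℤ) + 1) :
    W = (u:ℤ) ^ 2 - 1 ∨ W = -((u:ℤ) ^ 2 - 1) ∨ W = (u:ℤ) ^ 2 + 1 ∨ W = -((u:ℤ) ^ 2 + 1) ∨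
    W = (u:ℤ) ^ 2 + 2 * u - 1 ∨ W = -((u:ℤ) ^ 2 + 2 * u - 1) ∨
    W = (u:ℤ) ^ 2 + 2 * u + 1 ∨ W = -((u:ℤ) ^ 2 + 2 * u + 1) := by
  have hU5 : (5:ℤ) ≤ (u:ℤ) := by exact_mod_cast hu5
  have habs_up : |W| ≤ (u:ℤ) ^ 2 + 2 * u + 1 := by
    by_contra hcon
    push_neg at hcon
    have h2 : (u:ℤ) ^ 2 + 2 * u + 2 ≤ |W| := by omega
    have h3 : ((u:ℤ) ^ 2 + 2 * u + 2) ^ 2 ≤ |W| ^ 2 := by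
      apply pow_le_pow_left₀ (by positivity) h2 _
    rw [sq_abs] at h3
    nlinarith
  have habs_lo : (u:ℤ) ^ 2 - 2 ≤ |W| := by
    by_contra hcon
    push_neg at hcon
    have h2 : |W| ≤ (u:ℤ) ^ 2 - 3 := by omega
    have h3 : |W| ^ 2 ≤ ((u:ℤ) ^ 2 - 3) ^ 2 := by
      apply pow_le_pow_left₀ (abs_nonneg W) h2 _
    rw [sq_abs] at h3
    nlinarith
  rcases le_or_gt 0 W with hsgn | hsgn
  · rw [abs_of_nonneg hsgn] at habs_up habs_lo
    rcases enum_pos hu hu5 heven hdvd habs_lo habs_up with h | h | h | h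
    · exact Or.inl h
    · exact Or.inr (Or.inr (Or.inl h))
    · exact Or.inr (Or.inr (Or.inr (Or.inr (Or.inl h))))
    · exact Or.inr (Or.inr (Or.inr (Or.inr (Or.inr (Or.inr (Or.inl h))))))
  · rw [abs_of_neg hsgn] at habs_up habs_lo
    have heven' : 2 ∣ -W := by omega
    have hdvd' : (u:ℤ) ∣ (-W) ^ 2 - 1 := by
      have : (-W) ^ 2 - 1 = W ^ 2 - 1 := by ring
      rw [this]; exact hdvd
    rcases enum_pos hu hu5 heven' hdvd' habs_lo habs_up with h | h | h | h
    · exact Or.inr (Or.inl (by omega))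
    · exact Or.inr (Or.inr (Or.inr (Or.inl (by omega))))
    · exact Or.inr (Or.inr (Or.inr (Or.inr (Or.inr (Or.inl (by omega))))))
    · exact Or.inr (Or.inr (Or.inr (Or.inr (Or.inr (Or.inr (Or.inr (by omega)))))))


include hu hu5 in
lemma bound_int {x : ℚ} (h : IsPreper (cP u) x) {y : ℤ} (hy : (u:ℚ) * x = (y:ℚ)) :
    2 * |y| ≤ (u:ℤ) ^ 2 + 3 * u - 1 := by
  have h5 := uq5 hu5
  have hb := abs_bound hu5 h
  have hq : (2 * |y| : ℚ) < (u:ℚ) ^ 2 + 3 * u := by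
    have h1 : |(y:ℚ)| = (u:ℚ) * |x| := by
      rw [← hy, abs_mul, abs_of_nonneg (by positivity : (0:ℚ) ≤ (u:ℚ))]
    have h2 : (u:ℚ) * |x| < (u:ℚ) * (((u:ℚ) + 3) / 2) :=
      mul_lt_mul_of_pos_left hb (by linarith)
    have h3 : ((|y| : ℤ) : ℚ) = |(y:ℚ)| := by push_cast; ring
    rw [h3, h1]
    nlinarith
  have hz : (2 * |y| : ℤ) < ((u:ℤ) ^ 2 + 3 * u : ℤ) := by exact_mod_cast hq
  omega

include hu hu5 in
lemma rel_int {x : ℚ} {y y' : ℤ} (hy : (u:ℚ) * x = (y:ℚ))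
    (hy' : (u:ℚ) * (fc (cP u) x) = (y':ℚ)) :
    4 * (u:ℤ) * y' = 4 * y ^ 2 - Nz u := by
  have hu0 : (u:ℚ) ≠ 0 := uq0 hu5
  have hcast : ((4 * (u:ℤ) * y' : ℤ) : ℚ) = ((4 * y ^ 2 - Nz u : ℤ) : ℚ) := by
    push_cast
    rw [← hy, ← hy']
    show 4 * (u:ℚ) * ((u:ℚ) * (x ^ 2 + cP u)) = 4 * ((u:ℚ) * x) ^ 2 - ((Nz u : ℚ))
    rw [cP_eq, Nz_cast]
    field_simp
    ring
  exact_mod_cast hcast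

include hu hu5 in
lemma preper_cases {x : ℚ} (h : IsPreper (cP u) x) :
    x = AP u ∨ x = -AP u ∨ x = QP u ∨ x = -QP u ∨ x = BP u ∨ x = -BP u := by
  have h5 : (5:ℤ) ≤ (u:ℤ) := by exact_mod_cast hu5
  have hu0 : (u:ℚ) ≠ 0 := uq0 hu5
  obtain ⟨y0, hy0⟩ := int_rep hu hu5 h
  have h1p : IsPreper (cP u) (fc (cP u) x) := preper_fc h
  obtain ⟨y1, hy1⟩ := int_rep hu hu5 h1p
  have h2p : IsPreper (cP u) (fc (cP u) (fc (cP u) x)) := preper_fc h1p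
  obtain ⟨y2, hy2⟩ := int_rep hu hu5 h2p
  have rel1 := rel_int hu hu5 hy0 hy1
  have rel2 := rel_int hu hu5 hy1 hy2
  have b1 := bound_int hu hu5 h1p hy1
  have b2 := bound_int hu hu5 h2p hy2
  have hNzp := Nz_poly u
  -- window for W = 2*y0
  have habs1 : -(2 * (u:ℤ) * ((u:ℤ)^2 + 3*u - 1)) ≤ 4 * (u:ℤ) * y1 ∧
      4 * (u:ℤ) * y1 ≤ 2 * (u:ℤ) * ((u:ℤ)^2 + 3*u - 1) := by
    constructor
    · nlinarith [mul_le_mul_of_nonneg_left b1 (show (0:ℤ) ≤ 2*u by omega),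
        mul_le_mul_of_nonneg_left (neg_abs_le y1) (show (0:ℤ) ≤ 4*u by omega)]
    · nlinarith [mul_le_mul_of_nonneg_left b1 (show (0:ℤ) ≤ 2*u by omega),
        mul_le_mul_of_nonneg_left (le_abs_self y1) (show (0:ℤ) ≤ 4*u by omega)]
  have habs2 : 4 * (u:ℤ) * y2 ≤ 2 * (u:ℤ) * ((u:ℤ)^2 + 3*u - 1) := by
    nlinarith [mul_le_mul_of_nonneg_left b2 (show (0:ℤ) ≤ 2*u by omega),
      mul_le_mul_of_nonneg_left (le_abs_self y2) (show (0:ℤ) ≤ 4*u by omega)]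
  have heven : (2:ℤ) ∣ 2 * y0 := ⟨y0, rfl⟩
  have hdvd : (u:ℤ) ∣ (2*y0) ^ 2 - 1 := by
    refine ⟨(u:ℤ)^3 + 2*(u:ℤ)^2 + 2*(u:ℤ) - 2 + 4*y1, ?_⟩
    linear_combination -rel1 + hNzp
  have hlow : (u:ℤ) ^ 4 - 4 * (u:ℤ) ^ 2 + 1 ≤ (2*y0) ^ 2 := by
    nlinarith [rel1, hNzp, habs1.1]
  have hhigh : (2*y0) ^ 2 ≤ (u:ℤ) ^ 4 + 4 * (u:ℤ) ^ 3 + 8 * (u:ℤ) ^ 2 - 4 * (u:ℤ) + 1 := by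
    nlinarith [rel1, hNzp, habs1.2]
  have h2u0 : (2:ℚ) * (u:ℚ) ≠ 0 := by
    intro hc; apply hu0; linarith [hc]
  have hx2 : (2 * (u:ℚ)) * x = ((2 * y0 : ℤ) : ℚ) := by
    push_cast
    rw [← hy0]
    ring
  -- bad case handler
  have hbad : ∀ s : ℤ, s = 1 ∨ s = -1 → 2 * y0 = s * ((u:ℤ)^2 + 2*u + 1) → False := by
    intro s hs hW
    have h41 : 4 * (u:ℤ) * y1 = 2*(u:ℤ)^3 + 4*(u:ℤ)^2 + 6*(u:ℤ) := by
      rcases hs with rfl | rfl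
      · linear_combination rel1 - hNzp + (2*y0 + (u:ℤ)^2 + 2*u + 1) * hW
      · linear_combination rel1 - hNzp + (2*y0 - ((u:ℤ)^2 + 2*u + 1)) * hW
    have hy1v : 2 * y1 = (u:ℤ)^2 + 2*(u:ℤ) + 3 := by
      have hc := mul_left_cancel₀ (show (2*(u:ℤ)) ≠ 0 by omega)
        (show 2*(u:ℤ) * (2*y1) = 2*(u:ℤ) * ((u:ℤ)^2 + 2*u + 3) by linear_combination h41)
      exact hc
    have hsq : 4 * y1 ^ 2 = ((u:ℤ)^2 + 2*(u:ℤ) + 3) ^ 2 := by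
      linear_combination (2*y1 + (u:ℤ)^2 + 2*(u:ℤ) + 3) * hy1v
    nlinarith [rel2, hNzp, hsq, habs2]
  have hgoal : x = ((2 * y0 : ℤ) : ℚ) / (2 * (u:ℚ)) := by
    rw [eq_div_iff h2u0]
    linear_combination hx2
  rcases enum hu hu5 heven hdvd hlow hhigh with hW | hW | hW | hW | hW | hW | hW | hW
  · left; rw [AP, hgoal, hW]; push_cast; ring
  · right; left; rw [AP, hgoal, hW]; push_cast; ring
  · right; right; left; rw [QP, hgoal, hW]; push_cast; ring
  · right; right; right; left; rw [QP, hgoal, hW]; push_cast; ring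
  · right; right; right; right; right; rw [BP, hgoal, hW]; push_cast; ring
  · right; right; right; right; left; rw [BP, hgoal, hW]; push_cast; ring
  · exact absurd hW (by intro hW'; exact hbad 1 (Or.inl rfl) (by linarith [hW']))
  · exact absurd hW (by intro hW'; exact hbad (-1) (Or.inr rfl) (by linarith [hW']))


include hu5 in
lemma hfA : fc (cP u) (AP u) = BP u := by
  have hu0 : (u:ℚ) ≠ 0 := uq0 hu5
  rw [AP, BP]
  show (((u:ℚ)^2 - 1) / (2*u))^2 + cP u = _
  rw [cP_eq, Nz_cast]
  field_simp
  ring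

include hu5 in
lemma hfB : fc (cP u) (BP u) = AP u := by
  have hu0 : (u:ℚ) ≠ 0 := uq0 hu5
  rw [AP, BP]
  show (-(((u:ℚ)^2 + 2*u - 1) / (2*u)))^2 + cP u = _
  rw [cP_eq, Nz_cast]
  field_simp
  ring

include hu5 in
lemma hfQ : fc (cP u) (QP u) = -AP u := by
  have hu0 : (u:ℚ) ≠ 0 := uq0 hu5
  rw [AP, QP]
  show (((u:ℚ)^2 + 1) / (2*u))^2 + cP u = _
  rw [cP_eq, Nz_cast]
  field_simp
  ring

lemma fc_neg (c z : ℚ) : fc c (-z) = fc c z := by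
  show (-z)^2 + c = z^2 + c
  ring

include hu5 in
lemma hfnA : fc (cP u) (-AP u) = BP u := by rw [fc_neg, hfA hu5]

include hu5 in
lemma hfnB : fc (cP u) (-BP u) = AP u := by rw [fc_neg, hfB hu5]

include hu5 in
lemma hfnQ : fc (cP u) (-QP u) = -AP u := by rw [fc_neg, hfQ hu5]

include hu5 in
lemma it2A : (fc (cP u))^[2] (AP u) = AP u := by
  show fc (cP u) (fc (cP u) (AP u)) = AP u
  rw [hfA hu5, hfB hu5]

include hu5 in
lemma it2B : (fc (cP u))^[2] (BP u) = BP u := by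
  show fc (cP u) (fc (cP u) (BP u)) = BP u
  rw [hfB hu5, hfA hu5]

-- orderings
include hu5 in
lemma ord_chain : BP u < -QP u ∧ -QP u < -AP u ∧ -AP u < AP u ∧ AP u < QP u ∧
    QP u < -BP u ∧ 0 < AP u := by
  have h5 := uq5 hu5
  have h2u : (0:ℚ) < 2*(u:ℚ) := by linarith
  have hBP' : BP u = (-((u:ℚ)^2+2*(u:ℚ)-1))/(2*(u:ℚ)) := by rw [BP]; ring
  have hnQ : -QP u = (-((u:ℚ)^2+1))/(2*(u:ℚ)) := by rw [QP]; ring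
  have hnA : -AP u = (-((u:ℚ)^2-1))/(2*(u:ℚ)) := by rw [AP]; ring
  have hnB : -BP u = ((u:ℚ)^2+2*(u:ℚ)-1)/(2*(u:ℚ)) := by rw [BP]; ring
  refine ⟨?_, ?_, ?_, ?_, ?_, ?_⟩
  · rw [hBP', hnQ, div_lt_div_iff_of_pos_right h2u]; nlinarith
  · rw [hnQ, hnA, div_lt_div_iff_of_pos_right h2u]; nlinarith
  · rw [hnA, AP, div_lt_div_iff_of_pos_right h2u]; nlinarith
  · rw [AP, QP, div_lt_div_iff_of_pos_right h2u]; nlinarith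
  · rw [QP, hnB, div_lt_div_iff_of_pos_right h2u]; nlinarith
  · rw [AP]; apply div_pos (by nlinarith) h2u

include hu5 in
lemma cycA : ∀ k, (fc (cP u))^[k] (AP u) = AP u ∨ (fc (cP u))^[k] (AP u) = BP u := by
  intro k
  induction k with
  | zero => left; rfl
  | succ k ih =>
    rcases ih with hk | hk
    · right; rw [Function.iterate_succ_apply', hk, hfA hu5]
    · left; rw [Function.iterate_succ_apply', hk, hfB hu5]

include hu5 in
lemma cycB : ∀ k, (fc (cP u))^[k] (BP u) = AP u ∨ (fc (cP u))^[k] (BP u) = BP u := by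
  intro k
  induction k with
  | zero => right; rfl
  | succ k ih =>
    rcases ih with hk | hk
    · right; rw [Function.iterate_succ_apply', hk, hfA hu5]
    · left; rw [Function.iterate_succ_apply', hk, hfB hu5]

-- six preperiodic points
include hu5 in
lemma preperA : IsPreper (cP u) (AP u) := ⟨0, 2, by norm_num, (it2A hu5).symm⟩

include hu5 in
lemma preperB : IsPreper (cP u) (BP u) := ⟨0, 2, by norm_num, (it2B hu5).symm⟩

include hu5 in
lemma prepernA : IsPreper (cP u) (-AP u) := by
  refine ⟨1, 3, by norm_num, ?_⟩
  have h1 : (fc (cP u))^[1] (-AP u) = BP u := by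
    simp only [Function.iterate_one]; exact hfnA hu5
  have h3 : (fc (cP u))^[3] (-AP u) = BP u := by
    show (fc (cP u))^[2] (fc (cP u) (-AP u)) = BP u
    rw [hfnA hu5, it2B hu5]
  rw [h1, h3]

include hu5 in
lemma prepernB : IsPreper (cP u) (-BP u) := by
  refine ⟨1, 3, by norm_num, ?_⟩
  have h1 : (fc (cP u))^[1] (-BP u) = AP u := by
    simp only [Function.iterate_one]; exact hfnB hu5
  have h3 : (fc (cP u))^[3] (-BP u) = AP u := by
    show (fc (cP u))^[2] (fc (cP u) (-BP u)) = AP u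
    rw [hfnB hu5, it2A hu5]
  rw [h1, h3]

include hu5 in
lemma preperQ : IsPreper (cP u) (QP u) := by
  refine ⟨2, 4, by norm_num, ?_⟩
  have h2 : (fc (cP u))^[2] (QP u) = BP u := by
    show fc (cP u) (fc (cP u) (QP u)) = BP u
    rw [hfQ hu5, hfnA hu5]
  have h4 : (fc (cP u))^[4] (QP u) = BP u := by
    show (fc (cP u))^[2] ((fc (cP u))^[2] (QP u)) = BP u
    rw [h2, it2B hu5]
  rw [h2, h4]

include hu5 in
lemma prepernQ : IsPreper (cP u) (-QP u) := by
  refine ⟨2, 4, by norm_num, ?_⟩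
  have h2 : (fc (cP u))^[2] (-QP u) = BP u := by
    show fc (cP u) (fc (cP u) (-QP u)) = BP u
    rw [hfnQ hu5, hfnA hu5]
  have h4 : (fc (cP u))^[4] (-QP u) = BP u := by
    show (fc (cP u))^[2] ((fc (cP u))^[2] (-QP u)) = BP u
    rw [h2, it2B hu5]
  rw [h2, h4]


include hu hu5 in
lemma preper_set_eq :
    {x : ℚ | IsPreper (cP u) x} = {AP u, BP u, -AP u, -BP u, QP u, -QP u} := by
  ext x
  simp only [Set.mem_setOf_eq, Set.mem_insert_iff, Set.mem_singleton_iff]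
  constructor
  · intro h
    rcases preper_cases hu hu5 h with h | h | h | h | h | h <;> tauto
  · rintro (rfl | rfl | rfl | rfl | rfl | rfl)
    exacts [preperA hu5, preperB hu5, prepernA hu5, prepernB hu5, preperQ hu5, prepernQ hu5]

include hu hu5 in
lemma preper_ncard : {x : ℚ | IsPreper (cP u) x}.ncard = 6 := by
  rw [preper_set_eq hu hu5]
  obtain ⟨o1, o2, o3, o4, o5, o6⟩ := ord_chain hu5
  have nm1 : AP u ∉ ({BP u, -AP u, -BP u, QP u, -QP u} : Set ℚ) := by
    simp only [Set.mem_insert_iff, Set.mem_singleton_iff]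
    push_neg
    exact ⟨by intro h; linarith, by intro h; linarith, by intro h; linarith,
      by intro h; linarith, by intro h; linarith⟩
  have nm2 : BP u ∉ ({-AP u, -BP u, QP u, -QP u} : Set ℚ) := by
    simp only [Set.mem_insert_iff, Set.mem_singleton_iff]
    push_neg
    exact ⟨by intro h; linarith, by intro h; linarith, by intro h; linarith,
      by intro h; linarith⟩
  have nm3 : -AP u ∉ ({-BP u, QP u, -QP u} : Set ℚ) := by
    simp only [Set.mem_insert_iff, Set.mem_singleton_iff]
    push_neg
    exact ⟨by intro h; linarith, by intro h; linarith, by intro h; linarith⟩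
  have nm4 : -BP u ∉ ({QP u, -QP u} : Set ℚ) := by
    simp only [Set.mem_insert_iff, Set.mem_singleton_iff]
    push_neg
    exact ⟨by intro h; linarith, by intro h; linarith⟩
  have nm5 : QP u ∉ ({-QP u} : Set ℚ) := by
    simp only [Set.mem_singleton_iff]
    intro h; linarith
  rw [Set.ncard_insert_of_notMem nm1, Set.ncard_insert_of_notMem nm2,
    Set.ncard_insert_of_notMem nm3, Set.ncard_insert_of_notMem nm4,
    Set.ncard_insert_of_notMem nm5, Set.ncard_singleton]

include hu hu5 in
lemma per_set_eq : {x : ℚ | IsPer (cP u) x} = {AP u, BP u} := by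
  obtain ⟨o1, o2, o3, o4, o5, o6⟩ := ord_chain hu5
  ext x
  simp only [Set.mem_setOf_eq, Set.mem_insert_iff, Set.mem_singleton_iff]
  constructor
  · rintro ⟨n, hn1, hn⟩
    have hpre : IsPreper (cP u) x := ⟨0, n, hn1, by simpa using hn.symm⟩
    obtain ⟨m, rfl⟩ : ∃ m, n = m + 1 := ⟨n - 1, by omega⟩
    rcases preper_cases hu hu5 hpre with rfl | h | h | h | rfl | h
    · left; rfl
    · exfalso
      rw [h, Function.iterate_succ_apply, hfnA hu5] at hn
      rcases cycB hu5 m with hc | hc <;> rw [hc] at hn <;> rw [h] at * <;> linarith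
    · exfalso
      rw [h, Function.iterate_succ_apply, hfQ hu5] at hn
      cases m with
      | zero => simp only [Function.iterate_zero, id_eq] at hn; linarith
      | succ m' =>
        rw [Function.iterate_succ_apply, hfnA hu5] at hn
        rcases cycB hu5 m' with hc | hc <;> rw [hc] at hn <;> linarith
    · exfalso
      rw [h, Function.iterate_succ_apply, hfnQ hu5] at hn
      cases m with
      | zero => simp only [Function.iterate_zero, id_eq] at hn; linarith
      | succ m' =>
        rw [Function.iterate_succ_apply, hfnA hu5] at hn
        rcases cycB hu5 m' with hc | hc <;> rw [hc] at hn <;> linarith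
    · right; rfl
    · exfalso
      rw [h, Function.iterate_succ_apply, hfnB hu5] at hn
      rcases cycA hu5 m with hc | hc <;> rw [hc] at hn <;> linarith
  · rintro (rfl | rfl)
    exacts [⟨2, by norm_num, it2A hu5⟩, ⟨2, by norm_num, it2B hu5⟩]

include hu hu5 in
lemma cP_good : {x : ℚ | IsPreper (cP u) x}.ncard = 6 ∧
    ∃ a b : ℚ, a ≠ b ∧ {x : ℚ | IsPer (cP u) x} = {a, b} ∧
      fc (cP u) a = b ∧ fc (cP u) b = a := by
  obtain ⟨o1, o2, o3, o4, o5, o6⟩ := ord_chain hu5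
  exact ⟨preper_ncard hu hu5, AP u, BP u, by intro h; linarith, per_set_eq hu hu5,
    hfA hu5, hfB hu5⟩

end family

lemma cP_inj {p q : ℕ} (hp5 : 5 ≤ p) (hq5 : 5 ≤ q) (h : cP p = cP q) : p = q := by
  have ha5 : (5:ℚ) ≤ (p:ℚ) := by exact_mod_cast hp5
  have hb5 : (5:ℚ) ≤ (q:ℚ) := by exact_mod_cast hq5
  have ha0 : (p:ℚ) ≠ 0 := by intro hh; rw [hh] at ha5; norm_num at ha5
  have hb0 : (q:ℚ) ≠ 0 := by intro hh; rw [hh] at hb5; norm_num at hb5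
  rw [cP, cP] at h
  field_simp at h
  set a : ℚ := (p:ℚ)
  set b : ℚ := (q:ℚ)
  have hfac : (a - b) * ((a*b+1) * ((a+b)*(a*b-1) + 2*a*b)) = 0 := by
    linear_combination (-1 : ℚ) * h
  rcases mul_eq_zero.mp hfac with h1 | h2
  · have hab : a = b := by linarith
    have : (p:ℚ) = (q:ℚ) := hab
    exact_mod_cast this
  · exfalso
    have hab : (25:ℚ) ≤ a * b := by nlinarith
    have h3 : (0:ℚ) < a * b + 1 := by nlinarith
    have h4 : (0:ℚ) < (a + b) * (a * b - 1) + 2 * a * b := by nlinarith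
    nlinarith [mul_pos h3 h4, h2]

end G62


/-- Graph 6(2): infinitely many `c ∈ ℚ` with exactly 6 rational preperiodic points,
exactly 2 of them periodic, the two periodic points forming a 2-cycle. -/
theorem graph_6_2 :
    {c : ℚ | {x : ℚ | IsPreper c x}.ncard = 6 ∧
      ∃ a b : ℚ, a ≠ b ∧ {x : ℚ | IsPer c x} = {a, b} ∧
        fc c a = b ∧ fc c b = a}.Infinite := by
  have hsub : (G62.cP '' {p : ℕ | p.Prime ∧ 5 ≤ p}) ⊆
      {c : ℚ | {x : ℚ | IsPreper c x}.ncard = 6 ∧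
        ∃ a b : ℚ, a ≠ b ∧ {x : ℚ | IsPer c x} = {a, b} ∧
          fc c a = b ∧ fc c b = a} := by
    rintro c ⟨p, ⟨hp, hp5⟩, rfl⟩
    exact G62.cP_good hp hp5
  apply Set.Infinite.mono hsub
  apply Set.Infinite.image
  · intro p hp q hq hpq
    exact G62.cP_inj hp.2 hq.2 hpq
  · have heq : {p : ℕ | p.Prime ∧ 5 ≤ p} = {p : ℕ | p.Prime} \ Set.Iio 5 := by
      ext p
      simp only [Set.mem_setOf_eq, Set.mem_diff, Set.mem_Iio, not_lt]
    rw [heq]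
    exact Nat.infinite_setOf_prime.diff (Set.finite_Iio 5)
end

section
/- There exist infinitely many rational numbers c such that the map f_c(z) = z^2 + c has exactly 8 rational preperiodic points, of which exactly 4 are periodic: two are fixed points of f_c, and the other two form a cycle of exact length 2. (This data characterizes the directed graph 8(2,1,1).) -/
namespace Aux

lemma preper_step {c x : ℚ} (h : IsPreper c x) : IsPreper c (fc c x) := by
  obtain ⟨m, n, hmn, he⟩ := h
  exact ⟨m, n, hmn, by
    rw [← Function.iterate_succ_apply, ← Function.iterate_succ_apply,
      Function.iterate_succ_apply', Function.iterate_succ_apply', he]⟩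

/-- escape: if v(x)<0 and 2v(x)<v(c) then x is not preperiodic. -/
lemma not_preper {c x : ℚ} (ℓ : ℕ) [hl : Fact ℓ.Prime] (hc : c ≠ 0) (hx : x ≠ 0)
    (h1 : padicValRat ℓ x < 0) (h2 : 2 * padicValRat ℓ x < padicValRat ℓ c) :
    ¬ IsPreper c x := by
  have key : ∀ n : ℕ, (fc c)^[n] x ≠ 0 ∧
      padicValRat ℓ ((fc c)^[n] x) = 2 ^ n * padicValRat ℓ x := by
    intro n
    induction n with
    | zero => exact ⟨hx, by simp⟩
    | succ n ih =>
      obtain ⟨hy0, hyv⟩ := ih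
      set y := (fc c)^[n] x with hy
      have h2n : (1:ℤ) ≤ 2 ^ n := one_le_pow₀ (by norm_num)
      have hvy_neg : padicValRat ℓ y < 0 := by rw [hyv]; nlinarith
      have hvy2 : 2 * padicValRat ℓ y < padicValRat ℓ c := by rw [hyv]; nlinarith
      have hy2 : y ^ 2 ≠ 0 := pow_ne_zero _ hy0
      have hvsq : padicValRat ℓ (y ^ 2) = 2 * padicValRat ℓ y := by
        rw [padicValRat.pow y]; push_cast; ring
      have hsum_ne : y ^ 2 + c ≠ 0 := by
        intro h
        have hc' : c = -(y ^ 2) := by linarith [(add_eq_zero_iff_eq_neg.mp h)]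
        rw [hc', padicValRat.neg, hvsq] at hvy2
        omega
      have hstep : (fc c)^[n+1] x = y ^ 2 + c := by
        rw [Function.iterate_succ_apply', ← hy]; rfl
      refine ⟨by rw [hstep]; exact hsum_ne, ?_⟩
      rw [hstep, padicValRat.add_eq_of_lt hsum_ne hy2 hc (by rw [hvsq]; exact hvy2),
        hvsq, hyv]
      ring
  intro ⟨m, n, hmn, he⟩
  have hm := (key m).2
  have hn := (key n).2
  rw [he, hn] at hm
  have h2mn : (2:ℤ) ^ m < 2 ^ n := pow_lt_pow_right₀ (by norm_num) hmn
  nlinarith [hm, h2mn, h1]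


lemma val_nonneg_of_preper {c x : ℚ} (ℓ : ℕ) [Fact ℓ.Prime] (hc : c ≠ 0)
    (hvc : 0 ≤ padicValRat ℓ c) (h : IsPreper c x) : 0 ≤ padicValRat ℓ x := by
  by_contra hneg
  push_neg at hneg
  have hx : x ≠ 0 := by
    intro h0; rw [h0] at hneg; simp at hneg
  exact not_preper ℓ hc hx hneg (by omega) h

lemma val_eq_neg_one_of_preper {c x : ℚ} (ℓ : ℕ) [Fact ℓ.Prime] (hc : c ≠ 0)
    (hvc : padicValRat ℓ c = -2) (h : IsPreper c x) : padicValRat ℓ x = -1 := by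
  have hnc : ¬ IsPreper c c :=
    not_preper ℓ hc hc (by rw [hvc]; norm_num) (by rw [hvc]; norm_num)
  have hx : x ≠ 0 := by
    intro h0
    have h1 : IsPreper c (fc c x) := preper_step h
    rw [h0] at h1
    have : fc c 0 = c := by simp [fc]
    rw [this] at h1
    exact hnc h1
  rcases lt_trichotomy (padicValRat ℓ x) (-1) with hlt | heq | hgt
  · exact absurd h (not_preper ℓ hc hx (by omega) (by omega))
  · exact heq
  · exfalso
    have hge : 0 ≤ padicValRat ℓ x := by omega
    have hx2 : x ^ 2 ≠ 0 := pow_ne_zero _ hx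
    have hvx2 : padicValRat ℓ (x ^ 2) = 2 * padicValRat ℓ x := by
      rw [padicValRat.pow x]; push_cast; ring
    by_cases hy0 : x ^ 2 + c = 0
    · have h2 : IsPreper c (fc c (fc c x)) := preper_step (preper_step h)
      have e1 : fc c x = 0 := by simp [fc, hy0]
      rw [e1] at h2
      have : fc c 0 = c := by simp [fc]
      rw [this] at h2
      exact hnc h2
    · have hy : IsPreper c (fc c x) := preper_step h
      have hfc : fc c x = c + x ^ 2 := by simp [fc]; ring
      have hcy : c + x ^ 2 ≠ 0 := by rwa [add_comm] at hy0
      have hv : padicValRat ℓ (c + x ^ 2) = padicValRat ℓ c :=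
        padicValRat.add_eq_of_lt hcy hc hx2 (by rw [hvx2]; omega)
      have hfy : fc c x ≠ 0 := by rw [hfc]; exact hcy
      refine not_preper ℓ hc hfy ?_ ?_ hy
      · rw [hfc, hv]; omega
      · rw [hfc, hv]; omega

def Cp (p : ℕ) : ℚ := -(((p:ℚ)^4 + (p:ℚ)^2 + 1) / (4 * (p:ℚ)^2))

lemma Cp_eq (p : ℕ) : Cp p = -(((p^4+p^2+1 : ℕ) : ℚ) / ((4*p^2 : ℕ) : ℚ)) := by
  simp only [Cp]; push_cast; ring

lemma Cp_ne_zero {p : ℕ} (hp : p ≠ 0) : Cp p ≠ 0 := by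
  have hq : (0:ℚ) < (p:ℚ) := by exact_mod_cast Nat.pos_of_ne_zero hp
  simp only [Cp, neg_ne_zero]
  positivity

lemma valC_gen {p ℓ : ℕ} [Fact ℓ.Prime] (hp : p ≠ 0) :
    padicValRat ℓ (Cp p) =
      (padicValNat ℓ (p^4+p^2+1) : ℤ) - (padicValNat ℓ (4*p^2) : ℤ) := by
  have hM : ((p^4+p^2+1 : ℕ) : ℚ) ≠ 0 := Nat.cast_ne_zero.mpr (by positivity)
  have hD : ((4*p^2 : ℕ) : ℚ) ≠ 0 :=
    Nat.cast_ne_zero.mpr (Nat.mul_ne_zero (by norm_num) (pow_ne_zero _ hp))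
  rw [Cp_eq, padicValRat.neg, padicValRat.div hM hD, padicValRat.of_nat, padicValRat.of_nat]

lemma valC_two {p : ℕ} (hodd : Odd p) (hp : p ≠ 0) : padicValRat 2 (Cp p) = -2 := by
  rw [valC_gen hp]
  have hoM : Odd (p^4+p^2+1) := ((hodd.pow).add_odd (hodd.pow)).add_odd odd_one
  have h1 : padicValNat 2 (p^4+p^2+1) = 0 :=
    padicValNat.eq_zero_of_not_dvd
      (fun hd => (Nat.not_even_iff_odd.mpr hoM) (even_iff_two_dvd.mpr hd))
  have h2 : padicValNat 2 (4*p^2) = 2 := by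
    have e : 4 * p^2 = 2^2 * p^2 := by ring
    rw [e, padicValNat.mul (by norm_num) (pow_ne_zero _ hp), padicValNat.prime_pow,
      padicValNat.eq_zero_of_not_dvd
        (fun hd => (Nat.not_even_iff_odd.mpr hodd.pow) (even_iff_two_dvd.mpr hd))]
  rw [h1, h2]; norm_num

lemma valC_p {p : ℕ} (pp : p.Prime) (hp2 : p ≠ 2) : padicValRat p (Cp p) = -2 := by
  haveI : Fact p.Prime := ⟨pp⟩
  rw [valC_gen pp.ne_zero]
  have h1 : padicValNat p (p^4+p^2+1) = 0 := by
    apply padicValNat.eq_zero_of_not_dvd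
    intro hdvd
    have hps : p ∣ p^4+p^2 := ⟨p^3+p, by ring⟩
    have h11 := Nat.dvd_sub hdvd hps
    have e : p^4+p^2+1 - (p^4+p^2) = 1 := by omega
    rw [e] at h11
    exact pp.one_lt.ne' (Nat.dvd_one.mp h11)
  have h2 : padicValNat p (4*p^2) = 2 := by
    have hnd : ¬ p ∣ 4 := by
      intro hd
      have h4 : (4:ℕ) = 2^2 := by norm_num
      rw [h4] at hd
      exact hp2 ((Nat.prime_dvd_prime_iff_eq pp Nat.prime_two).mp (pp.dvd_of_dvd_pow hd))
    rw [padicValNat.mul (by norm_num) (pow_ne_zero _ pp.ne_zero),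
      padicValNat.eq_zero_of_not_dvd hnd, padicValNat.prime_pow]
  rw [h1, h2]; norm_num

lemma valC_other {p ℓ : ℕ} (lp : ℓ.Prime) (pp : p.Prime) (h2 : ℓ ≠ 2) (hlp : ℓ ≠ p) :
    0 ≤ padicValRat ℓ (Cp p) := by
  haveI : Fact ℓ.Prime := ⟨lp⟩
  rw [valC_gen pp.ne_zero]
  have h2' : padicValNat ℓ (4*p^2) = 0 := by
    apply padicValNat.eq_zero_of_not_dvd
    intro hdvd
    rcases (Nat.Prime.dvd_mul lp).mp hdvd with h | h
    · have h4 : (4:ℕ) = 2^2 := by norm_num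
      rw [h4] at h
      exact h2 ((Nat.prime_dvd_prime_iff_eq lp Nat.prime_two).mp (lp.dvd_of_dvd_pow h))
    · exact hlp ((Nat.prime_dvd_prime_iff_eq lp pp).mp (lp.dvd_of_dvd_pow h))
  rw [h2']; omega


/-- If all p-adic valuations of y are nonnegative, y is an integer. -/
lemma den_one_of_val_nonneg {y : ℚ} (hy : y ≠ 0)
    (h : ∀ ℓ : ℕ, ℓ.Prime → 0 ≤ padicValRat ℓ y) : y.den = 1 := by
  by_contra hden
  obtain ⟨ℓ, lp, hdvd⟩ := Nat.exists_prime_and_dvd hden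
  haveI : Fact ℓ.Prime := ⟨lp⟩
  have hnum : ¬ (ℓ:ℤ) ∣ y.num := by
    intro hd
    have h1 : ℓ ∣ y.num.natAbs := Int.natCast_dvd.mp hd
    have := Nat.Coprime.eq_one_of_dvd (y.reduced.coprime_dvd_left h1) hdvd
    exact lp.one_lt.ne' this
  have hv : padicValRat ℓ y < 0 := by
    rw [padicValRat_def, padicValInt.eq_zero_of_not_dvd hnum]
    have h1 : 1 ≤ padicValNat ℓ y.den := one_le_padicValNat_of_dvd y.pos.ne' hdvd
    omega
  exact absurd (h ℓ lp) (not_le.mpr hv)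

lemma val_two_odd {ℓ : ℕ} (lp : ℓ.Prime) (h2 : ℓ ≠ 2) : padicValRat ℓ (2:ℚ) = 0 := by
  haveI : Fact ℓ.Prime := ⟨lp⟩
  have : ((2:ℕ):ℚ) = (2:ℚ) := by norm_num
  rw [← this, padicValRat.of_nat, padicValNat.eq_zero_of_not_dvd
    (fun hd => h2 ((Nat.prime_dvd_prime_iff_eq lp Nat.prime_two).mp hd))]
  norm_num

lemma val_p_ne {ℓ p : ℕ} (lp : ℓ.Prime) (pp : p.Prime) (hne : ℓ ≠ p) :
    padicValRat ℓ ((p:ℕ):ℚ) = 0 := by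
  haveI : Fact ℓ.Prime := ⟨lp⟩
  rw [padicValRat.of_nat, padicValNat.eq_zero_of_not_dvd
    (fun hd => hne ((Nat.prime_dvd_prime_iff_eq lp pp).mp hd))]
  norm_num

/-- Representation: valuation conditions imply x = a/(2p) with a odd. -/
lemma rep_of_vals {p : ℕ} (pp : p.Prime) (hp2 : p ≠ 2) {x : ℚ}
    (h2 : padicValRat 2 x = -1) (hp : padicValRat p x = -1)
    (hoth : ∀ ℓ : ℕ, ℓ.Prime → ℓ ≠ 2 → ℓ ≠ p → 0 ≤ padicValRat ℓ x) :
    ∃ a : ℤ, Odd a ∧ x = (a : ℚ) / (2 * p) := by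
  haveI : Fact p.Prime := ⟨pp⟩
  have hx : x ≠ 0 := by
    intro h0; rw [h0] at h2; simp at h2
  have hp0 : ((p:ℕ):ℚ) ≠ 0 := Nat.cast_ne_zero.mpr pp.ne_zero
  set y : ℚ := 2 * (p:ℚ) * x with hy
  have hy0 : y ≠ 0 := by
    apply mul_ne_zero (mul_ne_zero (by norm_num) hp0) hx
  have hvy : ∀ ℓ : ℕ, ℓ.Prime →
      padicValRat ℓ y = padicValRat ℓ (2:ℚ) + padicValRat ℓ ((p:ℕ):ℚ) + padicValRat ℓ x := by
    intro ℓ lp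
    haveI : Fact ℓ.Prime := ⟨lp⟩
    rw [hy, padicValRat.mul (mul_ne_zero (by norm_num) hp0) hx,
      padicValRat.mul (by norm_num) hp0]
  have hv2 : padicValRat 2 y = 0 := by
    rw [hvy 2 Nat.prime_two, h2]
    have e1 : padicValRat 2 (2:ℚ) = 1 := by
      have : ((2:ℕ):ℚ) = (2:ℚ) := by norm_num
      rw [← this, padicValRat.of_nat, padicValNat.self (by norm_num)]; norm_num
    have e2 : padicValRat 2 ((p:ℕ):ℚ) = 0 := val_p_ne Nat.prime_two pp (Ne.symm hp2)
    rw [e1, e2]; ring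
  have hnonneg : ∀ ℓ : ℕ, ℓ.Prime → 0 ≤ padicValRat ℓ y := by
    intro ℓ lp
    haveI : Fact ℓ.Prime := ⟨lp⟩
    rcases eq_or_ne ℓ 2 with rfl | hl2
    · omega
    rcases eq_or_ne ℓ p with rfl | hlp
    · rw [hvy ℓ lp, hp, val_two_odd lp hl2]
      have : padicValRat ℓ ((ℓ:ℕ):ℚ) = 1 := by
        rw [padicValRat.of_nat, padicValNat.self lp.one_lt]; norm_num
      omega
    · rw [hvy ℓ lp, val_two_odd lp hl2, val_p_ne lp pp hlp]
      have := hoth ℓ lp hl2 hlp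
      omega
  have hden : y.den = 1 := den_one_of_val_nonneg hy0 hnonneg
  have hint : (y.num : ℚ) = y := Rat.coe_int_num_of_den_eq_one hden
  refine ⟨y.num, ?_, ?_⟩
  · rw [Int.not_even_iff_odd.symm.eq]
    intro hev
    have hd : (2:ℤ) ∣ y.num := hev.two_dvd
    have h1 : 1 ≤ padicValInt 2 y.num := by
      haveI : Fact (Nat.Prime 2) := ⟨Nat.prime_two⟩
      have : 2 ∣ y.num.natAbs := Int.natCast_dvd.mp (by exact_mod_cast hd)
      have hna : 0 < y.num.natAbs := Int.natAbs_pos.mpr (Rat.num_ne_zero.mpr hy0)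
      exact one_le_padicValNat_of_dvd hna.ne' this
    rw [padicValRat_def, hden] at hv2
    simp only [padicValNat.one, Nat.cast_zero, sub_zero] at hv2
    omega
  · have hxy : x = y / (2 * p) := by
      rw [hy]
      field_simp
    rw [hint]; exact hxy

lemma orbit_chain {c A : ℚ} (hmono : ∀ y, A < y → y < fc c y) {z : ℚ} (hz : A < z) :
    StrictMono (fun n => (fc c)^[n] z) ∧ ∀ n, A < (fc c)^[n] z := by
  have hall : ∀ n, A < (fc c)^[n] z := by
    intro n; induction n with
    | zero => simpa
    | succ n ih => rw [Function.iterate_succ_apply']; exact lt_trans ih (hmono _ ih)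
  refine ⟨strictMono_nat_of_lt_succ (fun n => ?_), hall⟩
  rw [Function.iterate_succ_apply']
  exact hmono _ (hall n)

/-- General bound lemma: if A is the larger fixed point (A^2+c=A, 1 < 2A, 0 < A),
  any preperiodic point x satisfies -A ≤ x ≤ A. -/
lemma bound_of_preper {c A x : ℚ} (hA : A ^ 2 + c = A) (h2A : 1 < 2 * A)
    (h : IsPreper c x) : -A ≤ x ∧ x ≤ A := by
  have hApos : 0 < A := by linarith
  have hmono : ∀ y, A < y → y < fc c y := by
    intro y hy
    show y < y ^ 2 + c
    nlinarith [mul_pos (sub_pos.mpr hy) (show (0:ℚ) < y + A - 1 by linarith)]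
  constructor
  · by_contra hlt
    push_neg at hlt
    have hfx : A < fc c x := by
      show A < x ^ 2 + c
      nlinarith [mul_pos (show (0:ℚ) < -(x + A) by linarith) (show (0:ℚ) < -(x - A) by linarith)]
    obtain ⟨hsm, hall⟩ := orbit_chain hmono hfx
    obtain ⟨m, n, hmn, he⟩ := h
    match m, hmn with
    | 0, hmn =>
      obtain ⟨n', rfl⟩ : ∃ n', n = n' + 1 := ⟨n - 1, by omega⟩
      have := hall n'
      rw [← Function.iterate_succ_apply] at this
      simp only [Function.iterate_zero, id] at he
      rw [← he] at this
      linarith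
    | (m' + 1), hmn =>
      obtain ⟨n', rfl⟩ : ∃ n', n = n' + 1 := ⟨n - 1, by omega⟩
      rw [Function.iterate_succ_apply, Function.iterate_succ_apply] at he
      exact absurd (hsm.injective he) (by omega)
  · by_contra hgt
    push_neg at hgt
    obtain ⟨hsm, _⟩ := orbit_chain hmono hgt
    obtain ⟨m, n, hmn, he⟩ := h
    exact absurd (hsm.injective he) (by omega)

/-- The key integer lemma. -/
lemma int_lemma {P a b d : ℤ} (hP : Prime P) (hP5 : 5 ≤ P) (hPodd : Odd P)
    (ha : Odd a) (hbound : |a| ≤ P^2 + P + 1)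
    (e1 : a^2 - (P^4+P^2+1) = 2*P*b) (e2 : b^2 - (P^4+P^2+1) = 2*P*d) :
    a = P^2+P+1 ∨ a = -(P^2+P+1) ∨ a = P^2-P+1 ∨ a = -(P^2-P+1) ∨
    a = P^2+P-1 ∨ a = -(P^2+P-1) ∨ a = P^2-P-1 ∨ a = -(P^2-P-1) := by
  have hPne : P ≠ 0 := by omega
  have hnd2 : ¬ (P ∣ 2) := fun hd => by
    have := Int.le_of_dvd (by norm_num) hd; omega
  -- step 1 : a ≡ ε (mod P)
  have hdvd1 : P ∣ (a-1)*(a+1) := ⟨2*b + P^3 + P, by linear_combination e1⟩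
  have hstep1 : ∃ ε : ℤ, (ε = 1 ∨ ε = -1) ∧ P ∣ a - ε := by
    rcases (hP.dvd_mul.mp hdvd1) with h | h
    · exact ⟨1, Or.inl rfl, h⟩
    · exact ⟨-1, Or.inr rfl, by simpa [sub_neg_eq_add] using h⟩
  obtain ⟨ε, hεor, k, hk⟩ := hstep1
  have hε2 : ε^2 = 1 := by rcases hεor with rfl | rfl <;> norm_num
  have hεabs : |ε| = 1 := by rcases hεor with rfl | rfl <;> norm_num
  have ha' : a = ε + P * k := by linarith [hk]
  -- k is even
  have hkeven : Even k := by
    have h1 : Even (P * k) := by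
      have : Odd ε := by rcases hεor with rfl | rfl <;> decide
      rcases ha with ⟨i, hi⟩
      rcases this with ⟨j, hj⟩
      exact ⟨i - j, by omega⟩
    rcases Int.even_mul.mp h1 with h | h
    · exact absurd h (Int.not_even_iff_odd.mpr hPodd)
    · exact h
  -- b ≡ ε k (mod P)
  have hcancel : P * (2*(b - ε*k)) = P * (P*(k^2 - P^2 - 1)) := by
    rw [ha'] at e1
    linear_combination -e1 + hε2
  have hbk : 2*(b - ε*k) = P*(k^2 - P^2 - 1) := mul_left_cancel₀ hPne hcancel
  have hPbk : P ∣ b - ε*k := by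
    have h2 : P ∣ 2*(b - ε*k) := ⟨k^2 - P^2 - 1, hbk⟩
    rcases hP.dvd_mul.mp h2 with h | h
    · exact absurd h hnd2
    · exact h
  -- k ≡ δ (mod P)
  have hdvd2 : P ∣ b^2 - 1 := ⟨2*d + P^3 + P, by linear_combination e2⟩
  have hdvdk : P ∣ (k-1)*(k+1) := by
    have h3 : P ∣ (b - ε*k)*(b + ε*k) := hPbk.mul_right _
    have h4 : P ∣ b^2 - (ε*k)^2 := by
      have e : b^2 - (ε*k)^2 = (b - ε*k)*(b + ε*k) := by ring
      rw [e]; exact h3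
    have h5 : P ∣ (ε*k)^2 - 1 := by
      have e : (ε*k)^2 - 1 = (b^2 - 1) - (b^2 - (ε*k)^2) := by ring
      rw [e]; exact dvd_sub hdvd2 h4
    have e : (k-1)*(k+1) = (ε*k)^2 - 1 + (1 - ε^2) * k^2 := by ring
    rw [e, hε2]
    simpa using h5
  have hstep2 : ∃ δ : ℤ, (δ = 1 ∨ δ = -1) ∧ P ∣ k - δ := by
    rcases (hP.dvd_mul.mp hdvdk) with h | h
    · exact ⟨1, Or.inl rfl, h⟩
    · exact ⟨-1, Or.inr rfl, by simpa [sub_neg_eq_add] using h⟩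
  obtain ⟨δ, hδor, m, hm⟩ := hstep2
  have hk' : k = δ + P * m := by linarith [hm]
  -- bound on k
  have hkabs : |k| ≤ P + 1 := by
    have h1 : |P * k| ≤ |a| + |ε| := by
      calc |P * k| = |a - ε| := by rw [ha']; ring_nf
        _ ≤ |a| + |ε| := abs_sub _ _
    rw [abs_mul, abs_of_pos (show (0:ℤ) < P by omega), hεabs] at h1
    nlinarith [abs_nonneg k]
  -- bound on m
  have hmabs : |m| ≤ 1 := by
    have h1 : |P * m| ≤ |k| + |δ| := by
      calc |P * m| = |k - δ| := by rw [hk']; ring_nf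
        _ ≤ |k| + |δ| := abs_sub _ _
    have hδabs : |δ| = 1 := by rcases hδor with rfl | rfl <;> norm_num
    rw [abs_mul, abs_of_pos (show (0:ℤ) < P by omega), hδabs] at h1
    nlinarith [abs_nonneg m]
  have hmor : m = 1 ∨ m = -1 := by
    rcases Int.abs_le_one_iff.mp hmabs with h | h | h
    · exfalso
      rw [h] at hk'
      simp at hk'
      rcases hδor with rfl | rfl <;> (rcases hkeven with ⟨j, hj⟩; omega)
    · exact Or.inl h
    · exact Or.inr h
  rcases hεor with rfl | rfl <;> rcases hδor with rfl | rfl <;> rcases hmor with rfl | rfl <;>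
    rw [ha', hk']
  · exact Or.inl (by ring)
  · exact Or.inr (Or.inr (Or.inr (Or.inr (Or.inr (Or.inr (Or.inr (by ring)))))))
  · exact Or.inr (Or.inr (Or.inl (by ring)))
  · exact Or.inr (Or.inr (Or.inr (Or.inr (Or.inr (Or.inl (by ring))))))
  · exact Or.inr (Or.inr (Or.inr (Or.inr (Or.inl (by ring)))))
  · exact Or.inr (Or.inr (Or.inr (Or.inl (by ring))))
  · exact Or.inr (Or.inr (Or.inr (Or.inr (Or.inr (Or.inr (Or.inl (by ring)))))))
  · exact Or.inr (Or.inl (by ring))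


set_option maxHeartbeats 2000000 in

lemma main_p {p : ℕ} (pp : p.Prime) (hp5 : 5 ≤ p) :
    {x : ℚ | IsPreper (Cp p) x}.ncard = 8 ∧
      ∃ a b x y : ℚ, a ≠ b ∧ x ≠ y ∧
        {z : ℚ | IsPer (Cp p) z} = {a, b, x, y} ∧
        fc (Cp p) a = a ∧ fc (Cp p) b = b ∧ fc (Cp p) x = y ∧ fc (Cp p) y = x := by
  haveI : Fact p.Prime := ⟨pp⟩
  have hp2 : p ≠ 2 := by omega
  have hp0 : p ≠ 0 := by omega
  have hodd : Odd p := pp.odd_of_ne_two hp2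
  set q : ℚ := (p:ℚ) with hqd
  have hq5 : (5:ℚ) ≤ q := by rw [hqd]; exact_mod_cast hp5
  have hq0 : (0:ℚ) < q := by linarith
  have hqne : q ≠ 0 := ne_of_gt hq0
  have hq2 : 25 ≤ q^2 := by nlinarith
  have hq2b : 5*q ≤ q^2 := by nlinarith
  set c : ℚ := Cp p with hcd
  have hc0 : c ≠ 0 := Cp_ne_zero hp0
  have hcval : c = -((q^4+q^2+1)/(4*q^2)) := rfl
  set D : ℚ := 2*q with hDd
  have hD0 : (0:ℚ) < D := by rw [hDd]; linarith
  have hDne : D ≠ 0 := ne_of_gt hD0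
  set A1 : ℚ := (q^2+q+1)/D with hA1d
  set A2 : ℚ := (-(q^2+q+1))/D with hA2d
  set B1 : ℚ := (-(q^2-q+1))/D with hB1d
  set B2 : ℚ := (q^2-q+1)/D with hB2d
  set X1 : ℚ := (q^2-q-1)/D with hX1d
  set X2 : ℚ := (-(q^2-q-1))/D with hX2d
  set Y1 : ℚ := (-(q^2+q-1))/D with hY1d
  set Y2 : ℚ := (q^2+q-1)/D with hY2d
  have hne : ∀ u v : ℚ, u ≠ v → u/D ≠ v/D := by
    intro u v h hh
    rw [div_eq_div_iff hDne hDne] at hh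
    exact h (mul_right_cancel₀ hDne hh)
  have fA1 : fc c A1 = A1 := by
    show A1^2 + c = A1
    simp only [hA1d, hA1d, hcval, hDd]
    field_simp
    ring
  have fA2 : fc c A2 = A1 := by
    show A2^2 + c = A1
    simp only [hA2d, hA1d, hcval, hDd]
    field_simp
    ring
  have fB1 : fc c B1 = B1 := by
    show B1^2 + c = B1
    simp only [hB1d, hB1d, hcval, hDd]
    field_simp
    ring
  have fB2 : fc c B2 = B1 := by
    show B2^2 + c = B1
    simp only [hB2d, hB1d, hcval, hDd]
    field_simp
    ring
  have fX1 : fc c X1 = Y1 := by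
    show X1^2 + c = Y1
    simp only [hX1d, hY1d, hcval, hDd]
    field_simp
    ring
  have fX2 : fc c X2 = Y1 := by
    show X2^2 + c = Y1
    simp only [hX2d, hY1d, hcval, hDd]
    field_simp
    ring
  have fY1 : fc c Y1 = X1 := by
    show Y1^2 + c = X1
    simp only [hY1d, hX1d, hcval, hDd]
    field_simp
    ring
  have fY2 : fc c Y2 = X1 := by
    show Y2^2 + c = X1
    simp only [hY2d, hX1d, hcval, hDd]
    field_simp
    ring
  have ne_A1_A2 : A1 ≠ A2 := by
    rw [hA1d, hA2d]
    exact hne _ _ (by intro h; linarith)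
  have ne_A1_B1 : A1 ≠ B1 := by
    rw [hA1d, hB1d]
    exact hne _ _ (by intro h; linarith)
  have ne_A1_B2 : A1 ≠ B2 := by
    rw [hA1d, hB2d]
    exact hne _ _ (by intro h; linarith)
  have ne_A1_X1 : A1 ≠ X1 := by
    rw [hA1d, hX1d]
    exact hne _ _ (by intro h; linarith)
  have ne_A1_X2 : A1 ≠ X2 := by
    rw [hA1d, hX2d]
    exact hne _ _ (by intro h; linarith)
  have ne_A1_Y1 : A1 ≠ Y1 := by
    rw [hA1d, hY1d]
    exact hne _ _ (by intro h; linarith)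
  have ne_A1_Y2 : A1 ≠ Y2 := by
    rw [hA1d, hY2d]
    exact hne _ _ (by intro h; linarith)
  have ne_A2_B1 : A2 ≠ B1 := by
    rw [hA2d, hB1d]
    exact hne _ _ (by intro h; linarith)
  have ne_A2_B2 : A2 ≠ B2 := by
    rw [hA2d, hB2d]
    exact hne _ _ (by intro h; linarith)
  have ne_A2_X1 : A2 ≠ X1 := by
    rw [hA2d, hX1d]
    exact hne _ _ (by intro h; linarith)
  have ne_A2_X2 : A2 ≠ X2 := by
    rw [hA2d, hX2d]
    exact hne _ _ (by intro h; linarith)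
  have ne_A2_Y1 : A2 ≠ Y1 := by
    rw [hA2d, hY1d]
    exact hne _ _ (by intro h; linarith)
  have ne_A2_Y2 : A2 ≠ Y2 := by
    rw [hA2d, hY2d]
    exact hne _ _ (by intro h; linarith)
  have ne_B1_B2 : B1 ≠ B2 := by
    rw [hB1d, hB2d]
    exact hne _ _ (by intro h; linarith)
  have ne_B1_X1 : B1 ≠ X1 := by
    rw [hB1d, hX1d]
    exact hne _ _ (by intro h; linarith)
  have ne_B1_X2 : B1 ≠ X2 := by
    rw [hB1d, hX2d]
    exact hne _ _ (by intro h; linarith)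
  have ne_B1_Y1 : B1 ≠ Y1 := by
    rw [hB1d, hY1d]
    exact hne _ _ (by intro h; linarith)
  have ne_B1_Y2 : B1 ≠ Y2 := by
    rw [hB1d, hY2d]
    exact hne _ _ (by intro h; linarith)
  have ne_B2_X1 : B2 ≠ X1 := by
    rw [hB2d, hX1d]
    exact hne _ _ (by intro h; linarith)
  have ne_B2_X2 : B2 ≠ X2 := by
    rw [hB2d, hX2d]
    exact hne _ _ (by intro h; linarith)
  have ne_B2_Y1 : B2 ≠ Y1 := by
    rw [hB2d, hY1d]
    exact hne _ _ (by intro h; linarith)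
  have ne_B2_Y2 : B2 ≠ Y2 := by
    rw [hB2d, hY2d]
    exact hne _ _ (by intro h; linarith)
  have ne_X1_X2 : X1 ≠ X2 := by
    rw [hX1d, hX2d]
    exact hne _ _ (by intro h; linarith)
  have ne_X1_Y1 : X1 ≠ Y1 := by
    rw [hX1d, hY1d]
    exact hne _ _ (by intro h; linarith)
  have ne_X1_Y2 : X1 ≠ Y2 := by
    rw [hX1d, hY2d]
    exact hne _ _ (by intro h; linarith)
  have ne_X2_Y1 : X2 ≠ Y1 := by
    rw [hX2d, hY1d]
    exact hne _ _ (by intro h; linarith)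
  have ne_X2_Y2 : X2 ≠ Y2 := by
    rw [hX2d, hY2d]
    exact hne _ _ (by intro h; linarith)
  have ne_Y1_Y2 : Y1 ≠ Y2 := by
    rw [hY1d, hY2d]
    exact hne _ _ (by intro h; linarith)
  have it1 : ∀ z : ℚ, (fc c)^[1] z = fc c z := fun z => rfl
  have it2 : ∀ z : ℚ, (fc c)^[2] z = fc c (fc c z) := fun z => rfl
  have it3 : ∀ z : ℚ, (fc c)^[3] z = fc c (fc c (fc c z)) := fun z => rfl
  set S : Set ℚ := {A1, A2, B1, B2, X1, X2, Y1, Y2} with hSd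
  -- forward inclusion
  have rep : ∀ x : ℚ, IsPreper c x → ∃ a : ℤ, Odd a ∧ x = (a:ℚ)/D := by
    intro x hx
    obtain ⟨a, ha, hxa⟩ := rep_of_vals pp hp2
      (val_eq_neg_one_of_preper 2 hc0 (valC_two hodd hp0) hx)
      (val_eq_neg_one_of_preper p hc0 (valC_p pp hp2) hx)
      (fun ℓ lp hl2 hlp => by
        haveI : Fact ℓ.Prime := ⟨lp⟩
        exact val_nonneg_of_preper ℓ hc0 (valC_other lp pp hl2 hlp) hx)
    exact ⟨a, ha, hxa⟩
  have expand : ∀ t : ℚ, fc c (t/D) * (4*q^2) = t^2 - (q^4+q^2+1) := by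
    intro t
    show ((t/D)^2 + c) * (4*q^2) = _
    rw [hcval, hDd]
    field_simp
    ring
  have key : ∀ u v : ℚ, fc c (u/D) = v/D → u^2 - (q^4+q^2+1) = 2*q*v := by
    intro u v h
    rw [← expand u, h, hDd]
    field_simp
    ring
  have forward : ∀ x : ℚ, IsPreper c x → x ∈ S := by
    intro x hx
    obtain ⟨a, ha, hxa⟩ := rep x hx
    obtain ⟨b, hb, hxb⟩ := rep _ (preper_step hx)
    obtain ⟨d, hd, hxd⟩ := rep _ (preper_step (preper_step hx))
    have h2A : 1 < 2 * A1 := by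
      rw [hA1d, hDd]
      rw [show 2*((q^2+q+1)/(2*q)) = (q^2+q+1)/q by field_simp]
      rw [one_lt_div hq0]
      linarith
    obtain ⟨hlow, hhigh⟩ := bound_of_preper fA1 h2A hx
    rw [hxa] at hlow hhigh
    rw [hA1d] at hhigh hlow
    have hup : (a:ℚ) ≤ q^2+q+1 := by
      exact (div_le_div_iff_of_pos_right hD0).mp hhigh
    have hlo : (-(q^2+q+1):ℚ) ≤ (a:ℚ) := by
      have : (-(q^2+q+1))/D ≤ (a:ℚ)/D := by
        rw [neg_div]
        exact hlow
      exact (div_le_div_iff_of_pos_right hD0).mp this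
    set P : ℤ := (p:ℤ) with hPd
    have hPq : ((P:ℤ):ℚ) = q := by rw [hPd, hqd]; push_cast; ring
    have hP : Prime P := Nat.prime_iff_prime_int.mp pp
    have hP5 : (5:ℤ) ≤ P := by rw [hPd]; exact_mod_cast hp5
    have hPodd : Odd P := by
      rcases hodd with ⟨k, hk⟩
      exact ⟨(k:ℤ), by rw [hPd]; exact_mod_cast hk⟩
    have hbound : |a| ≤ P^2 + P + 1 := by
      rw [abs_le]
      constructor
      · have := hlo
        rw [← hPq] at this
        exact_mod_cast this
      · have := hup
        rw [← hPq] at this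
        exact_mod_cast this
    have e1 : a^2 - (P^4+P^2+1) = 2*P*b := by
      have hk := key (a:ℚ) (b:ℚ) (by rw [← hxa]; exact hxb)
      rw [← hPq] at hk
      exact_mod_cast hk
    have e2 : b^2 - (P^4+P^2+1) = 2*P*d := by
      have hk := key (b:ℚ) (d:ℚ) (by rw [← hxb]; exact hxd)
      rw [← hPq] at hk
      exact_mod_cast hk
    have hcases := int_lemma hP hP5 hPodd ha hbound e1 e2
    rw [hSd, hxa]
    simp only [Set.mem_insert_iff, Set.mem_singleton_iff]
    rcases hcases with h|h|h|h|h|h|h|h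
    · refine Or.inl ?_
      rw [h, hA1d, ← hPq]
      push_cast
      ring
    · refine Or.inr (Or.inl ?_)
      rw [h, hA2d, ← hPq]
      push_cast
      ring
    · refine Or.inr (Or.inr (Or.inr (Or.inl ?_)))
      rw [h, hB2d, ← hPq]
      push_cast
      ring
    · refine Or.inr (Or.inr (Or.inl ?_))
      rw [h, hB1d, ← hPq]
      push_cast
      ring
    · refine Or.inr (Or.inr (Or.inr (Or.inr (Or.inr (Or.inr (Or.inr (?_)))))))
      rw [h, hY2d, ← hPq]
      push_cast
      ring
    · refine Or.inr (Or.inr (Or.inr (Or.inr (Or.inr (Or.inr (Or.inl ?_))))))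
      rw [h, hY1d, ← hPq]
      push_cast
      ring
    · refine Or.inr (Or.inr (Or.inr (Or.inr (Or.inl ?_))))
      rw [h, hX1d, ← hPq]
      push_cast
      ring
    · refine Or.inr (Or.inr (Or.inr (Or.inr (Or.inr (Or.inl ?_)))))
      rw [h, hX2d, ← hPq]
      push_cast
      ring
  -- backward inclusion and set equality
  have hSpre : {x : ℚ | IsPreper c x} = S := by
    apply Set.eq_of_subset_of_subset
    · intro x hx; exact forward x hx
    · intro x hx
      rw [hSd] at hx
      simp only [Set.mem_insert_iff, Set.mem_singleton_iff] at hx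
      rcases hx with rfl|rfl|rfl|rfl|rfl|rfl|rfl|rfl
      · exact ⟨0, 1, by norm_num, by rw [Function.iterate_zero_apply, it1, fA1]⟩
      · exact ⟨1, 2, by norm_num, by rw [it1, it2, fA2, fA1]⟩
      · exact ⟨0, 1, by norm_num, by rw [Function.iterate_zero_apply, it1, fB1]⟩
      · exact ⟨1, 2, by norm_num, by rw [it1, it2, fB2, fB1]⟩
      · exact ⟨0, 2, by norm_num, by rw [Function.iterate_zero_apply, it2, fX1, fY1]⟩
      · exact ⟨1, 3, by norm_num, by rw [it1, it3, fX2, fY1, fX1]⟩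
      · exact ⟨0, 2, by norm_num, by rw [Function.iterate_zero_apply, it2, fY1, fX1]⟩
      · exact ⟨1, 3, by norm_num, by rw [it1, it3, fY2, fX1, fY1]⟩
  have hcard : S.ncard = 8 := by
    rw [hSd]
    have fin7 : ({Y2} : Set ℚ).Finite := Set.finite_singleton _
    have fin6 : ({Y1, Y2} : Set ℚ).Finite := fin7.insert _
    have fin5 : ({X2, Y1, Y2} : Set ℚ).Finite := fin6.insert _
    have fin4 : ({X1, X2, Y1, Y2} : Set ℚ).Finite := fin5.insert _
    have fin3 : ({B2, X1, X2, Y1, Y2} : Set ℚ).Finite := fin4.insert _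
    have fin2 : ({B1, B2, X1, X2, Y1, Y2} : Set ℚ).Finite := fin3.insert _
    have fin1 : ({A2, B1, B2, X1, X2, Y1, Y2} : Set ℚ).Finite := fin2.insert _
    have nm0 : A1 ∉ ({A2, B1, B2, X1, X2, Y1, Y2} : Set ℚ) := by
      simp only [Set.mem_insert_iff, Set.mem_singleton_iff, not_or]
      exact ⟨ne_A1_A2, ne_A1_B1, ne_A1_B2, ne_A1_X1, ne_A1_X2, ne_A1_Y1, ne_A1_Y2⟩
    have nm1 : A2 ∉ ({B1, B2, X1, X2, Y1, Y2} : Set ℚ) := by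
      simp only [Set.mem_insert_iff, Set.mem_singleton_iff, not_or]
      exact ⟨ne_A2_B1, ne_A2_B2, ne_A2_X1, ne_A2_X2, ne_A2_Y1, ne_A2_Y2⟩
    have nm2 : B1 ∉ ({B2, X1, X2, Y1, Y2} : Set ℚ) := by
      simp only [Set.mem_insert_iff, Set.mem_singleton_iff, not_or]
      exact ⟨ne_B1_B2, ne_B1_X1, ne_B1_X2, ne_B1_Y1, ne_B1_Y2⟩
    have nm3 : B2 ∉ ({X1, X2, Y1, Y2} : Set ℚ) := by
      simp only [Set.mem_insert_iff, Set.mem_singleton_iff, not_or]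
      exact ⟨ne_B2_X1, ne_B2_X2, ne_B2_Y1, ne_B2_Y2⟩
    have nm4 : X1 ∉ ({X2, Y1, Y2} : Set ℚ) := by
      simp only [Set.mem_insert_iff, Set.mem_singleton_iff, not_or]
      exact ⟨ne_X1_X2, ne_X1_Y1, ne_X1_Y2⟩
    have nm5 : X2 ∉ ({Y1, Y2} : Set ℚ) := by
      simp only [Set.mem_insert_iff, Set.mem_singleton_iff, not_or]
      exact ⟨ne_X2_Y1, ne_X2_Y2⟩
    have nm6 : Y1 ∉ ({Y2} : Set ℚ) := by
      simp only [Set.mem_insert_iff, Set.mem_singleton_iff, not_or]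
      exact ne_Y1_Y2
    rw [Set.ncard_insert_of_notMem nm0 fin1, Set.ncard_insert_of_notMem nm1 fin2,
      Set.ncard_insert_of_notMem nm2 fin3, Set.ncard_insert_of_notMem nm3 fin4,
      Set.ncard_insert_of_notMem nm4 fin5, Set.ncard_insert_of_notMem nm5 fin6,
      Set.ncard_insert_of_notMem nm6 fin7, Set.ncard_singleton]
  have orbA2 : ∀ k : ℕ, (fc c)^[k+1] A2 = A1 := by
    intro k
    induction k with
    | zero => rw [it1, fA2]
    | succ k ih => rw [Function.iterate_succ_apply', ih, fA1]
  have orbB2 : ∀ k : ℕ, (fc c)^[k+1] B2 = B1 := by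
    intro k
    induction k with
    | zero => rw [it1, fB2]
    | succ k ih => rw [Function.iterate_succ_apply', ih, fB1]
  have orbX2 : ∀ k : ℕ, (fc c)^[k+1] X2 = Y1 ∨ (fc c)^[k+1] X2 = X1 := by
    intro k
    induction k with
    | zero => left; rw [it1, fX2]
    | succ k ih =>
      rcases ih with h | h
      · right; rw [Function.iterate_succ_apply', h, fY1]
      · left; rw [Function.iterate_succ_apply', h, fX1]
  have orbY2 : ∀ k : ℕ, (fc c)^[k+1] Y2 = X1 ∨ (fc c)^[k+1] Y2 = Y1 := by
    intro k
    induction k with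
    | zero => left; rw [it1, fY2]
    | succ k ih =>
      rcases ih with h | h
      · right; rw [Function.iterate_succ_apply', h, fX1]
      · left; rw [Function.iterate_succ_apply', h, fY1]
  have hSper : {z : ℚ | IsPer c z} = {A1, B1, X1, Y1} := by
    apply Set.eq_of_subset_of_subset
    · intro z hz
      obtain ⟨n, hn1, hper⟩ := hz
      have hzS : z ∈ S := forward z ⟨0, n, hn1, by
        rw [Function.iterate_zero_apply, hper]⟩
      obtain ⟨n', rfl⟩ : ∃ n', n = n' + 1 := ⟨n - 1, by omega⟩
      rw [hSd] at hzS
      simp only [Set.mem_insert_iff, Set.mem_singleton_iff] at hzS ⊢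
      rcases hzS with rfl|rfl|rfl|rfl|rfl|rfl|rfl|rfl
      · left; rfl
      · exfalso; rw [orbA2 n'] at hper; exact ne_A1_A2 hper
      · right; left; rfl
      · exfalso; rw [orbB2 n'] at hper; exact ne_B1_B2 hper.symm.symm
      · right; right; left; rfl
      · exfalso
        rcases orbX2 n' with h | h
        · rw [h] at hper; exact ne_X2_Y1 hper.symm
        · rw [h] at hper; exact ne_X1_X2 hper
      · right; right; right; rfl
      · exfalso
        rcases orbY2 n' with h | h
        · rw [h] at hper; exact ne_X1_Y2 hper
        · rw [h] at hper; exact ne_Y1_Y2 hper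
    · intro z hz
      simp only [Set.mem_insert_iff, Set.mem_singleton_iff] at hz
      rcases hz with rfl|rfl|rfl|rfl
      · exact ⟨1, le_refl 1, by rw [it1, fA1]⟩
      · exact ⟨1, le_refl 1, by rw [it1, fB1]⟩
      · exact ⟨2, by norm_num, by rw [it2, fX1, fY1]⟩
      · exact ⟨2, by norm_num, by rw [it2, fY1, fX1]⟩
  refine ⟨by rw [hSpre]; exact hcard, A1, B1, X1, Y1, ne_A1_B1, ne_X1_Y1, hSper, fA1, fB1, fX1, fY1⟩

lemma Cp_strictAnti {m n : ℕ} (hm : 0 < m) (hmn : m < n) : Cp n < Cp m := by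
  have hm' : (0:ℚ) < m := by exact_mod_cast hm
  have hm1 : (1:ℚ) ≤ m := by exact_mod_cast hm
  have hmn' : (m:ℚ) < n := by exact_mod_cast hmn
  have hn' : (0:ℚ) < n := lt_trans hm' hmn'
  show -(((n:ℚ)^4 + (n:ℚ)^2 + 1) / (4 * (n:ℚ)^2)) < -(((m:ℚ)^4 + (m:ℚ)^2 + 1) / (4 * (m:ℚ)^2))
  rw [neg_lt_neg_iff, div_lt_div_iff₀ (by positivity) (by positivity)]
  have h1 : (0:ℚ) < (n:ℚ)^2 - (m:ℚ)^2 := by nlinarith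
  have hmsq : (1:ℚ) ≤ (m:ℚ)^2 := by nlinarith
  have hnsq : (1:ℚ) < (n:ℚ)^2 := by nlinarith
  have h2 : (0:ℚ) < (m:ℚ)^2 * (n:ℚ)^2 - 1 := by
    have := mul_le_mul_of_nonneg_right hmsq (sq_nonneg (n:ℚ))
    rw [one_mul] at this
    nlinarith
  nlinarith [mul_pos h1 h2]

end Aux

/-- Graph 8(2,1,1): infinitely many `c ∈ ℚ` with exactly 8 rational preperiodic points,
exactly 4 of them periodic: two fixed points and one 2-cycle. -/
theorem graph_8_2_1_1 :
    {c : ℚ | {x : ℚ | IsPreper c x}.ncard = 8 ∧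
      ∃ a b x y : ℚ, a ≠ b ∧ x ≠ y ∧
        {z : ℚ | IsPer c z} = {a, b, x, y} ∧
        fc c a = a ∧ fc c b = b ∧ fc c x = y ∧ fc c y = x}.Infinite := by
  apply Set.infinite_of_injOn_mapsTo (f := fun n : ℕ => Aux.Cp n)
    (s := {n : ℕ | n.Prime ∧ 5 ≤ n})
  · intro m hm n hn hEq
    by_contra hne
    rcases lt_or_gt_of_ne hne with h | h
    · exact (ne_of_lt (Aux.Cp_strictAnti hm.1.pos h)) hEq.symm
    · exact (ne_of_lt (Aux.Cp_strictAnti hn.1.pos h)) hEq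
  · intro n hn
    exact Aux.main_p hn.1 hn.2
  · have he : {n : ℕ | n.Prime ∧ 5 ≤ n} = {n | n.Prime} \ {n | n < 5} := by
      ext n
      simp only [Set.mem_setOf_eq, Set.mem_diff, not_lt]
    rw [he]
    exact Nat.infinite_setOf_prime.diff (Set.finite_lt_nat 5)
end

section
/- There is a bound P such that for every prime number p > P, setting c = −3/4 − 1/p², the map f_c(z) = z² + c has exactly 4 rational preperiodic points, namely 1/2 + 1/p, 1/2 − 1/p, −1/2 + 1/p, −1/2 − 1/p; moreover the points −1/2 + 1/p and −1/2 − 1/p form a 2-cycle under f_c. -/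
namespace Graph42

lemma preper_iterate {c x : ℚ} (h : IsPreper c x) (k : ℕ) : IsPreper c ((fc c)^[k] x) := by
  obtain ⟨m, n, hmn, he⟩ := h
  refine ⟨m, n, hmn, ?_⟩
  rw [← Function.iterate_add_apply, ← Function.iterate_add_apply, Nat.add_comm m k,
    Nat.add_comm n k, Function.iterate_add_apply, Function.iterate_add_apply, he]

lemma preper_fc {c x : ℚ} (h : IsPreper c x) : IsPreper c (fc c x) := by
  simpa using preper_iterate h 1

lemma not_preper_abs {c x : ℚ} (hc : |c| ≤ 1) (hx : 2 ≤ |x|) : ¬ IsPreper c x := by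
  have step : ∀ y : ℚ, 2 ≤ |y| → |y| + 1 ≤ |fc c y| := by
    intro y hy
    have h1 : |y ^ 2| ≤ |fc c y| + |c| := by
      calc |y ^ 2| = |fc c y + (-c)| := by rw [fc]; ring_nf
      _ ≤ |fc c y| + |(-c)| := abs_add_le _ _
      _ = |fc c y| + |c| := by rw [abs_neg]
    have h2 : |y ^ 2| = |y| ^ 2 := by rw [abs_pow]
    nlinarith [abs_nonneg (fc c y)]
  intro h
  obtain ⟨m, n, hmn, he⟩ := h
  have inv : ∀ k : ℕ, 2 + (k : ℚ) ≤ |(fc c)^[k] x| := by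
    intro k
    induction k with
    | zero => simpa using hx
    | succ k ih =>
      rw [Function.iterate_succ_apply']
      have hk0 : (0:ℚ) ≤ (k:ℚ) := Nat.cast_nonneg k
      have h2 : (2:ℚ) ≤ |(fc c)^[k] x| := by linarith
      have := step _ h2
      push_cast
      linarith
  have mono : StrictMono (fun k => |(fc c)^[k] x|) := by
    apply strictMono_nat_of_lt_succ
    intro k
    have hk0 : (0:ℚ) ≤ (k:ℚ) := Nat.cast_nonneg k
    have h2 : (2:ℚ) ≤ |(fc c)^[k] x| := by have := inv k; linarith
    have := step _ h2
    simp only [Function.iterate_succ_apply']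
    linarith
  exact absurd (congrArg abs he) (ne_of_lt (mono hmn))

lemma not_preper_val (q : ℕ) [hq : Fact q.Prime] {c x : ℚ} (hc : c ≠ 0)
    (h1 : padicValRat q x < 0) (h2 : 2 * padicValRat q x < padicValRat q c) :
    ¬ IsPreper c x := by
  have step : ∀ y : ℚ, padicValRat q y < 0 → 2 * padicValRat q y < padicValRat q c →
      padicValRat q (fc c y) = 2 * padicValRat q y := by
    intro y hy1 hy2
    have hy0 : y ≠ 0 := by rintro rfl; simp [padicValRat.zero] at hy1
    have hysq : padicValRat q (y ^ 2) = 2 * padicValRat q y := by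
      rw [padicValRat.pow y]; push_cast; ring
    have hne : y ^ 2 + c ≠ 0 := by
      intro h
      have hcv : c = -(y ^ 2) := by linarith
      rw [hcv, padicValRat.neg, hysq] at hy2
      omega
    have := padicValRat.add_eq_of_lt (p := q) hne (pow_ne_zero 2 hy0) hc
      (by rw [hysq]; exact hy2)
    show padicValRat q (y ^ 2 + c) = 2 * padicValRat q y
    rw [this, hysq]
  intro h
  obtain ⟨m, n, hmn, he⟩ := h
  have inv : ∀ k : ℕ, padicValRat q ((fc c)^[k] x) < 0 ∧
      2 * padicValRat q ((fc c)^[k] x) < padicValRat q c := by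
    intro k
    induction k with
    | zero => exact ⟨h1, h2⟩
    | succ k ih =>
      rw [Function.iterate_succ_apply', step _ ih.1 ih.2]
      omega
  have anti : StrictAnti (fun k => padicValRat q ((fc c)^[k] x)) := by
    apply strictAnti_nat_of_succ_lt
    intro k
    have hk := (inv k).1
    simp only [Function.iterate_succ_apply', step _ (inv k).1 (inv k).2]
    omega
  exact absurd (congrArg (padicValRat q) he) (ne_of_gt (anti hmn))


lemma dvd_den_val_neg (q : ℕ) [hq : Fact q.Prime] {y : ℚ} (h : q ∣ y.den) :
    padicValRat q y < 0 := by
  have h1 : 1 ≤ padicValNat q y.den := one_le_padicValNat_of_dvd y.pos.ne' h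
  have h2 : padicValInt q y.num = 0 := by
    apply padicValInt.eq_zero_of_not_dvd
    rw [Int.natCast_dvd]
    intro hd
    have hg : q ∣ Nat.gcd y.num.natAbs y.den := Nat.dvd_gcd hd h
    have : Nat.gcd y.num.natAbs y.den = 1 := y.reduced
    rw [this, Nat.dvd_one] at hg
    exact hq.out.one_lt.ne' hg
  rw [padicValRat_def, h2]
  omega

lemma exists_int_of_val_nonneg {y : ℚ}
    (h : ∀ q : ℕ, q.Prime → 0 ≤ padicValRat q y) : ∃ a : ℤ, y = (a : ℚ) := by
  refine ⟨y.num, ?_⟩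
  have hden : y.den = 1 := by
    by_contra hd
    have hq := Nat.minFac_prime hd
    haveI : Fact (y.den.minFac).Prime := ⟨hq⟩
    have hneg := dvd_den_val_neg y.den.minFac (Nat.minFac_dvd _)
    have := h _ hq
    omega
  exact ((Rat.den_eq_one_iff y).mp hden).symm

lemma val_int_pos (q : ℕ) [hq : Fact q.Prime] {a : ℤ} (ha : a ≠ 0) (h : (q:ℤ) ∣ a) :
    0 < padicValRat q (a:ℚ) := by
  rw [padicValRat.of_int]
  have : 1 ≤ padicValInt q a :=
    one_le_padicValNat_of_dvd (Int.natAbs_pos.mpr ha).ne' (Int.natCast_dvd.mp h)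
  exact_mod_cast this

lemma val_int_eq_zero (q : ℕ) [hq : Fact q.Prime] {a : ℤ} (h : ¬ (q:ℤ) ∣ a) :
    padicValRat q (a:ℚ) = 0 := by
  rw [padicValRat.of_int, padicValInt.eq_zero_of_not_dvd h]
  rfl

lemma val_int_nonneg (q : ℕ) {a : ℤ} : 0 ≤ padicValRat q (a:ℚ) := by
  rw [padicValRat.of_int]
  exact_mod_cast Nat.zero_le _

lemma val_nat_eq_zero (q : ℕ) {n : ℕ} (h : ¬ q ∣ n) :
    padicValRat q (n:ℚ) = 0 := by
  rw [← padicValRat_of_nat, padicValNat.eq_zero_of_not_dvd h]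
  rfl

lemma val_nat_nonneg (q : ℕ) {n : ℕ} : 0 ≤ padicValRat q (n:ℚ) := by
  rw [← padicValRat_of_nat]
  exact_mod_cast Nat.zero_le _

section

variable {p : ℕ}

lemma pQ0 (h32 : 32 < p) : (p:ℚ) ≠ 0 := by
  have : 0 < p := by omega
  exact_mod_cast this.ne'

lemma pQ33 (h32 : 32 < p) : (33:ℚ) ≤ (p:ℚ) := by exact_mod_cast h32

lemma c_ne (h32 : 32 < p) : (-(3/4) - 1/(p:ℚ)^2) ≠ 0 := by
  have h0 : (0:ℚ) < 1/(p:ℚ)^2 := by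
    have := pQ33 h32
    positivity
  intro h
  nlinarith

lemma c_abs (h32 : 32 < p) : |(-(3/4) - 1/(p:ℚ)^2)| ≤ 1 := by
  have h33 := pQ33 h32
  have h0 : (0:ℚ) < 1/(p:ℚ)^2 := by positivity
  have h14 : 1/(p:ℚ)^2 ≤ 1/4 := by
    rw [div_le_div_iff₀ (by positivity) (by norm_num)]
    nlinarith
  rw [abs_le]
  constructor <;> nlinarith

lemma val_c_eq (h32 : 32 < p) (q : ℕ) [Fact q.Prime] :
    padicValRat q (-(3/4) - 1/(p:ℚ)^2) =
      padicValRat q (((3*p^2+4 : ℕ)):ℚ) -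
        2 * (padicValRat q (2:ℚ) + padicValRat q ((p:ℚ))) := by
  have hp0 := pQ0 h32
  have hnum : ((3*p^2+4 : ℕ) : ℚ) = 3*(p:ℚ)^2 + 4 := by push_cast; ring
  have hc_eq : (-(3/4) - 1/(p:ℚ)^2) = -((3*(p:ℚ)^2+4) / ((2*(p:ℚ))^2)) := by
    field_simp
    ring
  rw [hc_eq, padicValRat.neg,
    padicValRat.div (by positivity) (by positivity),
    padicValRat.pow (2*(p:ℚ)),
    padicValRat.mul (by norm_num) hp0, hnum]
  push_cast
  ring

lemma val_two_two : padicValRat 2 (2:ℚ) = 1 := by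
  have := padicValRat.self (p := 2) (by norm_num)
  simpa using this

lemma not_two_dvd_p (hp : p.Prime) (h32 : 32 < p) : ¬ 2 ∣ p := by
  intro h
  have := (Nat.prime_dvd_prime_iff_eq Nat.prime_two hp).mp h
  omega

lemma not_two_dvd_num (hp : p.Prime) (h32 : 32 < p) : ¬ 2 ∣ (3*p^2+4) := by
  have hodd : p % 2 = 1 := hp.eq_two_or_odd.resolve_left (by omega)
  have hsq : p^2 % 2 = 1 := by rw [Nat.pow_mod, hodd]
  have key : ∀ t : ℕ, t % 2 = 1 → ¬ 2 ∣ 3*t+4 := by intro t ht; omega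
  exact key _ hsq

lemma not_p_dvd_num (hp : p.Prime) (h32 : 32 < p) : ¬ p ∣ (3*p^2+4) := by
  intro h
  have h1 : p ∣ 3*p^2 := ⟨3*p, by ring⟩
  have h2 : p ∣ 4 := (Nat.dvd_add_right h1).mp h
  have := Nat.le_of_dvd (by norm_num) h2
  omega

lemma not_p_dvd_two (h32 : 32 < p) : ¬ p ∣ 2 := by
  intro h
  have := Nat.le_of_dvd (by norm_num) h
  omega

lemma val_c_2 (hp : p.Prime) (h32 : 32 < p) :
    padicValRat 2 (-(3/4) - 1/(p:ℚ)^2) = -2 := by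
  have hA := val_nat_eq_zero 2 (not_two_dvd_num hp h32)
  have hB := val_two_two
  have hC := val_nat_eq_zero 2 (not_two_dvd_p hp h32)
  rw [val_c_eq h32 2, hA, hB, hC]
  ring

lemma val_c_p (hp : p.Prime) (h32 : 32 < p) :
    letI : Fact p.Prime := ⟨hp⟩
    padicValRat p (-(3/4) - 1/(p:ℚ)^2) = -2 := by
  haveI : Fact p.Prime := ⟨hp⟩
  have hA := val_nat_eq_zero p (not_p_dvd_num hp h32)
  have hB : padicValRat p (2:ℚ) = 0 := by
    have := val_nat_eq_zero p (not_p_dvd_two h32)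
    simpa using this
  have hC : padicValRat p ((p:ℚ)) = 1 := padicValRat.self (by omega)
  rw [val_c_eq h32 p, hA, hB, hC]
  ring

lemma val_c_other (hp : p.Prime) (h32 : 32 < p) (q : ℕ) (hq : q.Prime)
    (hq2 : q ≠ 2) (hqp : q ≠ p) :
    letI : Fact q.Prime := ⟨hq⟩
    0 ≤ padicValRat q (-(3/4) - 1/(p:ℚ)^2) := by
  haveI : Fact q.Prime := ⟨hq⟩
  have hA := val_nat_nonneg q (n := 3*p^2+4)
  have hB : padicValRat q (2:ℚ) = 0 := by
    have : ¬ q ∣ 2 := fun h => hq2 ((Nat.prime_dvd_prime_iff_eq hq Nat.prime_two).mp h)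
    simpa using val_nat_eq_zero q this
  have hC : padicValRat q ((p:ℚ)) = 0 :=
    val_nat_eq_zero q (fun h => hqp ((Nat.prime_dvd_prime_iff_eq hq hp).mp h))
  rw [val_c_eq h32 q, hB, hC]
  omega

end



lemma val_x_eq (q : ℕ) [Fact q.Prime] {c x : ℚ} (hc : c ≠ 0)
    (hvc : padicValRat q c = -2) (hx : IsPreper c x) : padicValRat q x = -1 := by
  have hlow : -2 ≤ 2 * padicValRat q x := by
    by_contra hl
    push_neg at hl
    exact not_preper_val q hc (by omega) (by omega) hx
  have hup : padicValRat q x < 0 := by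
    by_contra hu
    push_neg at hu
    have hvfx : padicValRat q (fc c x) = -2 := by
      by_cases hx0 : x = 0
      · rw [hx0]
        show padicValRat q ((0:ℚ) ^ 2 + c) = -2
        norm_num [hvc]
      · have hx2 : padicValRat q (x ^ 2) = 2 * padicValRat q x := by
          rw [padicValRat.pow x]; push_cast; ring
        have hne : x ^ 2 + c ≠ 0 := by
          intro h
          have hh : x ^ 2 = -c := by linarith
          have := congrArg (padicValRat q) hh
          rw [padicValRat.neg, hx2, hvc] at this
          omega
        have h' : padicValRat q (c + x ^ 2) = padicValRat q c :=
          padicValRat.add_eq_of_lt (by rw [add_comm]; exact hne) hc (pow_ne_zero 2 hx0)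
            (by rw [hx2, hvc]; omega)
        show padicValRat q (x ^ 2 + c) = -2
        rw [add_comm, h', hvc]
    exact not_preper_val q hc (by omega) (by rw [hvfx, hvc]; omega) (preper_fc hx)
  omega

lemma val_x_nonneg (q : ℕ) [Fact q.Prime] {c x : ℚ} (hc : c ≠ 0)
    (hvc : 0 ≤ padicValRat q c) (hx : IsPreper c x) : 0 ≤ padicValRat q x := by
  by_contra h
  push_neg at h
  exact not_preper_val q hc h (by omega) hx

lemma preper_form {p : ℕ} (hp : p.Prime) (h32 : 32 < p) {x : ℚ}
    (hx : IsPreper (-(3/4) - 1/(p:ℚ)^2) x) :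
    ∃ a : ℤ, ¬ (2 ∣ a) ∧ ¬ ((p:ℤ) ∣ a) ∧ x = (a:ℚ) / (2*(p:ℚ)) := by
  haveI : Fact p.Prime := ⟨hp⟩
  have hc := c_ne (p := p) h32
  have hp0 := pQ0 (p := p) h32
  have hv2 : padicValRat 2 x = -1 := val_x_eq 2 hc (val_c_2 hp h32) hx
  have hvp : padicValRat p x = -1 := val_x_eq p hc (val_c_p hp h32) hx
  have hx0 : x ≠ 0 := by
    rintro rfl
    rw [padicValRat.zero] at hv2
    omega
  have hy0 : (2:ℚ) * (p:ℚ) * x ≠ 0 := by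
    apply mul_ne_zero (mul_ne_zero (by norm_num) hp0) hx0
  have hval_y : ∀ q : ℕ, Fact q.Prime →
      padicValRat q ((2:ℚ) * (p:ℚ) * x) =
        padicValRat q (2:ℚ) + padicValRat q ((p:ℚ)) + padicValRat q x := by
    intro q hq
    rw [padicValRat.mul (mul_ne_zero (by norm_num) hp0) hx0,
      padicValRat.mul (by norm_num) hp0]
  have hynn : ∀ q : ℕ, q.Prime → 0 ≤ padicValRat q ((2:ℚ) * (p:ℚ) * x) := by
    intro q hq
    haveI hqf : Fact q.Prime := ⟨hq⟩
    rw [hval_y q hqf]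
    by_cases hq2 : q = 2
    · subst hq2
      rw [val_two_two, val_nat_eq_zero 2 (not_two_dvd_p hp h32), hv2]
      norm_num
    · by_cases hqp : q = p
      · subst hqp
        have hB : padicValRat q (2:ℚ) = 0 := by
          simpa using val_nat_eq_zero q (not_p_dvd_two h32)
        rw [hB, padicValRat.self (p := q) (by omega), hvp]
        norm_num
      · have hB : padicValRat q (2:ℚ) = 0 := by
          have : ¬ q ∣ 2 := fun h => hq2 ((Nat.prime_dvd_prime_iff_eq hq Nat.prime_two).mp h)
          simpa using val_nat_eq_zero q this
        have hC : padicValRat q ((p:ℚ)) = 0 :=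
          val_nat_eq_zero q (fun h => hqp ((Nat.prime_dvd_prime_iff_eq hq hp).mp h))
        have hD : 0 ≤ padicValRat q x :=
          val_x_nonneg q hc (val_c_other hp h32 q hq hq2 hqp) hx
        omega
  obtain ⟨a, hay⟩ := exists_int_of_val_nonneg hynn
  have ha0 : a ≠ 0 := by
    rintro rfl
    rw [hay] at hy0
    simp at hy0
  have hv2y : padicValRat 2 ((2:ℚ) * (p:ℚ) * x) = 0 := by
    rw [hval_y 2 ⟨Nat.prime_two⟩, val_two_two, val_nat_eq_zero 2 (not_two_dvd_p hp h32), hv2]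
    ring
  have hvpy : padicValRat p ((2:ℚ) * (p:ℚ) * x) = 0 := by
    have hB : padicValRat p (2:ℚ) = 0 := by
      simpa using val_nat_eq_zero p (not_p_dvd_two h32)
    rw [hval_y p ⟨hp⟩, hB, padicValRat.self (p := p) (by omega), hvp]
    ring
  refine ⟨a, ?_, ?_, ?_⟩
  · intro h2a
    have := val_int_pos 2 ha0 (by exact_mod_cast h2a)
    rw [← hay, hv2y] at this
    omega
  · intro hpa
    have := val_int_pos p ha0 hpa
    rw [← hay, hvpy] at this
    omega
  · rw [eq_div_iff (by positivity)]
    linear_combination hay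


lemma not_preper_big {p : ℕ} (hp : p.Prime) (h32 : 32 < p) {x : ℚ} {m : ℤ}
    (hm : ¬ (p:ℤ) ∣ m)
    (h2 : (fc (-(3/4) - 1/(p:ℚ)^2))^[2] x = (m:ℚ) / (4*(p:ℚ)^2)) :
    ¬ IsPreper (-(3/4) - 1/(p:ℚ)^2) x := by
  haveI : Fact p.Prime := ⟨hp⟩
  have hp0 := pQ0 (p := p) h32
  have hc := c_ne (p := p) h32
  have hm0 : m ≠ 0 := by rintro rfl; exact hm (dvd_zero _)
  have hmQ : (m:ℚ) ≠ 0 := Int.cast_ne_zero.mpr hm0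
  have hval : padicValRat p ((m:ℚ) / (4*(p:ℚ)^2)) = -2 := by
    have h4 : padicValRat p (4:ℚ) = 0 := by
      have : ¬ p ∣ 4 := by
        intro h
        have := Nat.le_of_dvd (by norm_num) h
        omega
      simpa using val_nat_eq_zero p this
    rw [padicValRat.div hmQ (by positivity),
      padicValRat.mul (by norm_num) (by positivity),
      padicValRat.pow (p:ℚ), val_int_eq_zero p hm, h4,
      padicValRat.self (p := p) (by omega)]
    push_cast
    try ring
  intro hx
  have hpre2 := preper_iterate hx 2
  rw [h2] at hpre2
  exact not_preper_val p hc (by omega) (by rw [hval, val_c_p hp h32]; omega) hpre2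

lemma preper_mem {p : ℕ} (hp : p.Prime) (h32 : 32 < p) {x : ℚ}
    (hx : IsPreper (-(3/4) - 1/(p:ℚ)^2) x) :
    x = 1/2 + 1/(p:ℚ) ∨ x = 1/2 - 1/(p:ℚ) ∨
      x = -(1/2) + 1/(p:ℚ) ∨ x = -(1/2) - 1/(p:ℚ) := by
  haveI : Fact p.Prime := ⟨hp⟩
  have hp0 := pQ0 (p := p) h32
  have h33 := pQ33 (p := p) h32
  have h33Z : (33:ℤ) ≤ (p:ℤ) := by exact_mod_cast h32
  obtain ⟨a, ha2, hap, hxa⟩ := preper_form hp h32 hx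
  have habs : |x| < 2 := by
    by_contra h
    push_neg at h
    exact not_preper_abs (c_abs h32) h hx
  obtain ⟨b, hb2, hbp, hfb⟩ := preper_form hp h32 (preper_fc hx)
  have hEq : ((a:ℚ)/(2*(p:ℚ)))^2 + (-(3/4) - 1/(p:ℚ)^2) = (b:ℚ)/(2*(p:ℚ)) := by
    rw [← hxa, ← hfb]
    rfl
  have hQ : (a:ℚ)^2 - 3*(p:ℚ)^2 - 4 = 2*(p:ℚ)*(b:ℚ) := by
    field_simp at hEq
    have h8 : (8:ℚ)*(p:ℚ)^3 * ((a:ℚ)^2 - 3*(p:ℚ)^2 - 4) = (8:ℚ)*(p:ℚ)^3 * (2*(p:ℚ)*(b:ℚ)) := by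
      linear_combination 2*(p:ℚ)^3 * hEq
    exact mul_left_cancel₀ (by positivity) h8
  have hZ : a^2 - 3*(p:ℤ)^2 - 4 = 2*(p:ℤ)*b := by exact_mod_cast hQ
  have hpd : (p:ℤ) ∣ (a-2)*(a+2) := ⟨3*(p:ℤ) + 2*b, by linear_combination hZ⟩
  have hprime : Prime (p:ℤ) := Nat.prime_iff_prime_int.mp hp
  have haZ : |a| < 4*(p:ℤ) := by
    have h1 : |(a:ℚ)| < 4*(p:ℚ) := by
      rw [hxa, abs_div] at habs
      have hd : |2*(p:ℚ)| = 2*(p:ℚ) := abs_of_pos (by positivity)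
      rw [hd, div_lt_iff₀ (by positivity)] at habs
      linarith
    have : ((|a| : ℤ) : ℚ) < 4*(p:ℚ) := by rwa [Int.cast_abs]
    exact_mod_cast this
  have haL : -(4*(p:ℤ)) < a := (abs_lt.mp haZ).1
  have haU : a < 4*(p:ℤ) := (abs_lt.mp haZ).2
  -- common elimination of the big cases
  have helim : ∀ s : ℤ, (s = 1 ∨ s = -1) → ¬ (a = 3*(p:ℤ) + 2*s ∨ a = -(3*(p:ℤ) + 2*s)) := by
    intro s hs hcase
    have hxsq : x^2 = ((3*(p:ℚ) + 2*(s:ℚ))/(2*(p:ℚ)))^2 := by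
      rcases hcase with h | h <;> rw [hxa, h] <;> push_cast <;> ring
    have hm' : ¬ (p:ℤ) ∣ (6*(p:ℤ)^2 + 36*(p:ℤ)*s + 32) := by
      intro hd
      have h1 : (p:ℤ) ∣ 6*(p:ℤ)^2 + 36*(p:ℤ)*s := ⟨6*(p:ℤ) + 36*s, by ring⟩
      have h2 : (p:ℤ) ∣ 32 := (dvd_add_right h1).mp hd
      have := Int.le_of_dvd (by norm_num) h2
      omega
    refine not_preper_big hp h32 hm' ?_ hx
    have hit2 : (fc (-(3/4) - 1/(p:ℚ)^2))^[2] x = fc (-(3/4) - 1/(p:ℚ)^2) (fc (-(3/4) - 1/(p:ℚ)^2) x) := by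
      rw [Function.iterate_succ_apply', Function.iterate_one]
    rw [hit2]
    simp only [fc]
    rw [hxsq]
    rcases hs with rfl | rfl <;> push_cast <;> field_simp <;> ring
  have hcases : a = (p:ℤ) + 2 ∨ a = (p:ℤ) - 2 ∨ a = -((p:ℤ) - 2) ∨ a = -((p:ℤ) + 2) := by
    rcases hprime.dvd_mul.mp hpd with hd | hd
    · obtain ⟨k, hk⟩ := hd
      have hkU : k < 4 := by
        by_contra hcon
        push_neg at hcon
        have := mul_le_mul_of_nonneg_left hcon (show (0:ℤ) ≤ (p:ℤ) by omega)
        linarith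
      have hkL : -5 < k := by
        by_contra hcon
        push_neg at hcon
        have := mul_le_mul_of_nonneg_left hcon (show (0:ℤ) ≤ (p:ℤ) by omega)
        linarith
      have hkodd : ¬ 2 ∣ k := by
        rintro ⟨t, rfl⟩
        exact ha2 ⟨(p:ℤ)*t + 1, by linarith⟩
      have hk4 : k = -3 ∨ k = -1 ∨ k = 1 ∨ k = 3 := by omega
      rcases hk4 with rfl | rfl | rfl | rfl
      · exact absurd (Or.inr (by linarith : a = -(3*(p:ℤ) + 2*(-1))))
          (helim (-1) (Or.inr rfl))
      · right; right; left; linarith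
      · left; linarith
      · exact absurd (Or.inl (by linarith : a = 3*(p:ℤ) + 2*1))
          (helim 1 (Or.inl rfl))
    · obtain ⟨k, hk⟩ := hd
      have hkU : k < 5 := by
        by_contra hcon
        push_neg at hcon
        have := mul_le_mul_of_nonneg_left hcon (show (0:ℤ) ≤ (p:ℤ) by omega)
        linarith
      have hkL : -4 < k := by
        by_contra hcon
        push_neg at hcon
        have := mul_le_mul_of_nonneg_left hcon (show (0:ℤ) ≤ (p:ℤ) by omega)
        linarith
      have hkodd : ¬ 2 ∣ k := by
        rintro ⟨t, rfl⟩
        exact ha2 ⟨(p:ℤ)*t - 1, by linarith⟩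
      have hk4 : k = -3 ∨ k = -1 ∨ k = 1 ∨ k = 3 := by omega
      rcases hk4 with rfl | rfl | rfl | rfl
      · exact absurd (Or.inr (by linarith : a = -(3*(p:ℤ) + 2*1)))
          (helim 1 (Or.inl rfl))
      · right; right; right; linarith
      · right; left; linarith
      · exact absurd (Or.inl (by linarith : a = 3*(p:ℤ) + 2*(-1)))
          (helim (-1) (Or.inr rfl))
  rcases hcases with rfl | rfl | rfl | rfl
  · left; rw [hxa]; push_cast; field_simp; try ring
  · right; left; rw [hxa]; push_cast; field_simp; try ring
  · right; right; left; rw [hxa]; push_cast; field_simp; try ring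
  · right; right; right; rw [hxa]; push_cast; field_simp; try ring

section Final

variable {p : ℕ}

lemma fvalA (h32 : 32 < p) :
    fc (-(3/4) - 1/(p:ℚ)^2) (1/2 + 1/(p:ℚ)) = -(1/2) + 1/(p:ℚ) := by
  have hp0 := pQ0 (p := p) h32
  simp only [fc]
  field_simp
  ring

lemma fvalB (h32 : 32 < p) :
    fc (-(3/4) - 1/(p:ℚ)^2) (1/2 - 1/(p:ℚ)) = -(1/2) - 1/(p:ℚ) := by
  have hp0 := pQ0 (p := p) h32
  simp only [fc]
  field_simp
  ring

lemma fvalC (h32 : 32 < p) :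
    fc (-(3/4) - 1/(p:ℚ)^2) (-(1/2) + 1/(p:ℚ)) = -(1/2) - 1/(p:ℚ) := by
  have hp0 := pQ0 (p := p) h32
  simp only [fc]
  field_simp
  ring

lemma fvalD (h32 : 32 < p) :
    fc (-(3/4) - 1/(p:ℚ)^2) (-(1/2) - 1/(p:ℚ)) = -(1/2) + 1/(p:ℚ) := by
  have hp0 := pQ0 (p := p) h32
  simp only [fc]
  field_simp
  ring

lemma iter2 (c y : ℚ) : (fc c)^[2] y = fc c (fc c y) := by
  rw [show (2:ℕ) = 1+1 from rfl, Function.iterate_succ_apply', Function.iterate_one]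

lemma iter3 (c y : ℚ) : (fc c)^[3] y = fc c (fc c (fc c y)) := by
  rw [show (3:ℕ) = 2+1 from rfl, Function.iterate_succ_apply', iter2]

lemma preperC (h32 : 32 < p) : IsPreper (-(3/4) - 1/(p:ℚ)^2) (-(1/2) + 1/(p:ℚ)) := by
  refine ⟨0, 2, by norm_num, ?_⟩
  rw [Function.iterate_zero_apply, iter2, fvalC h32, fvalD h32]

lemma preperD (h32 : 32 < p) : IsPreper (-(3/4) - 1/(p:ℚ)^2) (-(1/2) - 1/(p:ℚ)) := by
  refine ⟨0, 2, by norm_num, ?_⟩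
  rw [Function.iterate_zero_apply, iter2, fvalD h32, fvalC h32]

lemma preperA (h32 : 32 < p) : IsPreper (-(3/4) - 1/(p:ℚ)^2) (1/2 + 1/(p:ℚ)) := by
  refine ⟨1, 3, by norm_num, ?_⟩
  rw [Function.iterate_one, iter3, fvalA h32, fvalC h32, fvalD h32]

lemma preperB (h32 : 32 < p) : IsPreper (-(3/4) - 1/(p:ℚ)^2) (1/2 - 1/(p:ℚ)) := by
  refine ⟨1, 3, by norm_num, ?_⟩
  rw [Function.iterate_one, iter3, fvalB h32, fvalD h32, fvalC h32]

lemma set_eq (hp : p.Prime) (h32 : 32 < p) :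
    {x : ℚ | IsPreper (-(3/4) - 1/(p:ℚ)^2) x} =
      ({1/2 + 1/(p:ℚ), 1/2 - 1/(p:ℚ), -(1/2) + 1/(p:ℚ), -(1/2) - 1/(p:ℚ)} : Set ℚ) := by
  ext x
  simp only [Set.mem_setOf_eq, Set.mem_insert_iff, Set.mem_singleton_iff]
  constructor
  · exact preper_mem hp h32
  · rintro (rfl | rfl | rfl | rfl)
    · exact preperA h32
    · exact preperB h32
    · exact preperC h32
    · exact preperD h32

lemma hpos (h32 : 32 < p) : 0 < 1/(p:ℚ) := by
  have := pQ33 (p := p) h32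
  positivity

lemma hsmall (h32 : 32 < p) : 1/(p:ℚ) ≤ 1/33 := by
  have h33 := pQ33 (p := p) h32
  rw [div_le_div_iff₀ (by linarith) (by norm_num)]
  linarith

lemma neAB (h32 : 32 < p) : 1/2 + 1/(p:ℚ) ≠ 1/2 - 1/(p:ℚ) := by
  have := hpos h32; intro h; linarith

lemma neAC (h32 : 32 < p) : 1/2 + 1/(p:ℚ) ≠ -(1/2) + 1/(p:ℚ) := by
  have := hpos h32; intro h; linarith

lemma neAD (h32 : 32 < p) : 1/2 + 1/(p:ℚ) ≠ -(1/2) - 1/(p:ℚ) := by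
  have := hpos h32; intro h; linarith

lemma neBC (h32 : 32 < p) : 1/2 - 1/(p:ℚ) ≠ -(1/2) + 1/(p:ℚ) := by
  have h1 := hpos h32; have h2 := hsmall h32; intro h; linarith

lemma neBD (h32 : 32 < p) : 1/2 - 1/(p:ℚ) ≠ -(1/2) - 1/(p:ℚ) := by
  have h1 := hpos h32; have h2 := hsmall h32; intro h; linarith

lemma neCD (h32 : 32 < p) : -(1/2) + 1/(p:ℚ) ≠ -(1/2) - 1/(p:ℚ) := by
  have := hpos h32; intro h; linarith

lemma ncard_eq (hp : p.Prime) (h32 : 32 < p) :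
    {x : ℚ | IsPreper (-(3/4) - 1/(p:ℚ)^2) x}.ncard = 4 := by
  rw [set_eq hp h32]
  rw [Set.ncard_insert_of_notMem (by
      simp only [Set.mem_insert_iff, Set.mem_singleton_iff]
      push_neg
      exact ⟨neAB h32, neAC h32, neAD h32⟩),
    Set.ncard_insert_of_notMem (by
      simp only [Set.mem_insert_iff, Set.mem_singleton_iff]
      push_neg
      exact ⟨neBC h32, neBD h32⟩),
    Set.ncard_pair (neCD h32)]

end Final

theorem main (p : ℕ) (hp : p.Prime) (h32 : 32 < p) :
    {x : ℚ | IsPreper (-(3/4) - 1/(p:ℚ)^2) x} =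
        {1/2 + 1/(p:ℚ), 1/2 - 1/(p:ℚ), -(1/2) + 1/(p:ℚ), -(1/2) - 1/(p:ℚ)} ∧
      {x : ℚ | IsPreper (-(3/4) - 1/(p:ℚ)^2) x}.ncard = 4 ∧
      (-(1/2) + 1/(p:ℚ) : ℚ) ≠ -(1/2) - 1/(p:ℚ) ∧
      fc (-(3/4) - 1/(p:ℚ)^2) (-(1/2) + 1/(p:ℚ)) = -(1/2) - 1/(p:ℚ) ∧
      fc (-(3/4) - 1/(p:ℚ)^2) (-(1/2) - 1/(p:ℚ)) = -(1/2) + 1/(p:ℚ) :=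
  ⟨set_eq hp h32, ncard_eq hp h32, neCD h32, fvalC h32, fvalD h32⟩

end Graph42


/-- For all sufficiently large primes `p` and `c = -3/4 - 1/p²`, the map `f_c` has exactly
the four rational preperiodic points `±1/2 ± 1/p`, and `-1/2 + 1/p`, `-1/2 - 1/p`
form a 2-cycle. -/
theorem graph_4_2_family :
    ∃ P : ℕ, ∀ p : ℕ, p.Prime → P < p →
      letI c : ℚ := -(3 / 4) - 1 / (p : ℚ) ^ 2
      {x : ℚ | IsPreper c x} =
        {1 / 2 + 1 / (p : ℚ), 1 / 2 - 1 / (p : ℚ),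
          -(1 / 2) + 1 / (p : ℚ), -(1 / 2) - 1 / (p : ℚ)} ∧
      {x : ℚ | IsPreper c x}.ncard = 4 ∧
      (-(1 / 2) + 1 / (p : ℚ) : ℚ) ≠ -(1 / 2) - 1 / (p : ℚ) ∧
      fc c (-(1 / 2) + 1 / (p : ℚ)) = -(1 / 2) - 1 / (p : ℚ) ∧
      fc c (-(1 / 2) - 1 / (p : ℚ)) = -(1 / 2) + 1 / (p : ℚ) := by
  exact ⟨32, fun p hp h32 => Graph42.main p hp h32⟩
end
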